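/- arXiv:0903.4987 — 4 statements merged into one kernel-verified Lean document; each statement's English description precedes it below -/
import Mathlib

section
/- Let φ be an indecomposable 𝔖∞-central state on G = Γ≀𝔖∞ with GNS triple (π, H, ξ). Then for every g ∈ G and all x, y ∈ H, lim_{n→∞} ⟨π(ω_n·g·ω_n)x, y⟩ = φ(g)·⟨x, y⟩; i.e. the weak operator limit of π(ω_n g ω_n) exists and equals φ(g)·I. -/
open scoped Classical ComplexOrder
open Filter Topology

noncomputable section

namespace DN

local notation "⟪" x ", " y "⟫" => @inner ℂ _ _ x y

/-- The group `𝔖∞` of finitely supported permutations of `ℕ`. -/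
def SInf : Subgroup (Equiv.Perm ℕ) where
  carrier := {s | {i | s i ≠ i}.Finite}
  one_mem' := by simp
  mul_mem' := by
    intro s t hs ht
    refine Set.Finite.subset (hs.union ht) fun i hi => ?_
    simp only [Set.mem_setOf_eq, Set.mem_union, Equiv.Perm.mul_apply] at hi ⊢
    by_contra h
    push_neg at h
    rw [h.2, h.1] at hi
    exact hi rfl
  inv_mem' := by
    intro s hs
    refine Set.Finite.subset hs fun i hi => ?_
    simp only [Set.mem_setOf_eq] at hi ⊢
    intro h
    exact hi (Equiv.Perm.inv_eq_iff_eq.mpr h.symm)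

theorem mem_SInf (s : Equiv.Perm ℕ) : s ∈ SInf ↔ {i | s i ≠ i}.Finite := Iff.rfl

/-- The group `Γ^∞_e` of finitely supported sequences in `Γ`. -/
def GammaE (Γ : Type*) [Group Γ] : Subgroup (ℕ → Γ) where
  carrier := {γ | {i | γ i ≠ 1}.Finite}
  one_mem' := by simp
  mul_mem' := by
    intro f g hf hg
    refine Set.Finite.subset (hf.union hg) fun i hi => ?_
    simp only [Set.mem_setOf_eq, Set.mem_union, Pi.mul_apply] at hi ⊢
    by_contra h
    push_neg at h
    rw [h.1, h.2] at hi
    exact hi (one_mul 1)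
  inv_mem' := by
    intro f hf
    refine Set.Finite.subset hf fun i hi => ?_
    simp only [Set.mem_setOf_eq, Pi.inv_apply, ne_eq, inv_eq_one] at hi ⊢
    exact hi

theorem mem_GammaE {Γ : Type*} [Group Γ] (γ : ℕ → Γ) :
    γ ∈ GammaE Γ ↔ {i | γ i ≠ 1}.Finite := Iff.rfl

/-- The permutation action of `Equiv.Perm ℕ` on `ℕ → Γ`. -/
def permMulAut (Γ : Type*) [Group Γ] (s : Equiv.Perm ℕ) : MulAut (ℕ → Γ) where
  toFun γ := γ ∘ s.symm
  invFun γ := γ ∘ s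
  left_inv γ := by funext i; simp [Function.comp]
  right_inv γ := by funext i; simp [Function.comp]
  map_mul' γ δ := rfl

def permAction (Γ : Type*) [Group Γ] : Equiv.Perm ℕ →* MulAut (ℕ → Γ) where
  toFun := permMulAut Γ
  map_one' := by ext γ i; rfl
  map_mul' s t := by ext γ i; rfl

/-- The (big) wreath product `(ℕ → Γ) ⋊ Perm ℕ`. -/
abbrev W (Γ : Type*) [Group Γ] := (ℕ → Γ) ⋊[permAction Γ] Equiv.Perm ℕ

/-- The wreath product `G = Γ ≀ 𝔖∞`, as the subgroup of `W Γ` of finitely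
supported elements. -/
def WG (Γ : Type*) [Group Γ] : Subgroup (W Γ) where
  carrier := {g | {i | g.right i ≠ i}.Finite ∧ {i | g.left i ≠ 1}.Finite}
  one_mem' := by
    constructor
    · convert Set.finite_empty using 1
      ext i; simp
    · convert Set.finite_empty using 1
      ext i; simp
  mul_mem' := by
    rintro a b ⟨ha1, ha2⟩ ⟨hb1, hb2⟩
    constructor
    · refine Set.Finite.subset (ha1.union hb1) fun i hi => ?_
      simp only [Set.mem_setOf_eq, Set.mem_union, SemidirectProduct.mul_right,
        Equiv.Perm.mul_apply] at hi ⊢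
      by_contra h
      push_neg at h
      rw [h.2, h.1] at hi
      exact hi rfl
    · refine Set.Finite.subset (ha2.union (hb2.image a.right)) fun i hi => ?_
      simp only [Set.mem_setOf_eq, SemidirectProduct.mul_left, Pi.mul_apply] at hi
      by_contra h
      simp only [Set.mem_union, Set.mem_setOf_eq, Set.mem_image, not_or, not_exists,
        not_and, not_not] at h
      obtain ⟨h1, h2⟩ := h
      apply hi
      have hb : b.left (a.right⁻¹ i) = 1 := by
        by_contra hc
        exact h2 (a.right⁻¹ i) hc (by simp)
      have hrfl : (permAction Γ a.right b.left) i = b.left (a.right⁻¹ i) := rfl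
      rw [h1, one_mul, hrfl, hb]
  inv_mem' := by
    rintro a ⟨ha1, ha2⟩
    constructor
    · refine Set.Finite.subset ha1 fun i hi => ?_
      simp only [Set.mem_setOf_eq, SemidirectProduct.inv_right] at hi ⊢
      intro h
      exact hi (Equiv.Perm.inv_eq_iff_eq.mpr h.symm)
    · refine Set.Finite.subset (Set.Finite.preimage (a.right.injective.injOn) ha2)
        fun i hi => ?_
      simp only [Set.mem_setOf_eq] at hi
      simp only [Set.mem_preimage, Set.mem_setOf_eq]
      intro h
      apply hi
      have hrfl : (a⁻¹).left i = (a.left (a.right i))⁻¹ := rfl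
      rw [hrfl, h, inv_one]

theorem mem_WG {Γ : Type*} [Group Γ] (g : W Γ) :
    g ∈ WG Γ ↔ {i | g.right i ≠ i}.Finite ∧ {i | g.left i ≠ 1}.Finite := Iff.rfl

/-- The canonical copy of `𝔖∞` inside `Γ ≀ 𝔖∞`. -/
def permW {Γ : Type*} [Group Γ] (s : SInf) : WG Γ :=
  ⟨SemidirectProduct.inr s.1, by
    rw [mem_WG]
    constructor
    · have h : (SemidirectProduct.inr s.1 : W Γ).right = s.1 := SemidirectProduct.right_inr _
      rw [h]
      exact s.2
    · convert Set.finite_empty using 1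
      ext i; simp⟩

/-- The canonical copy of `Γ^∞_e` inside `Γ ≀ 𝔖∞`. -/
def seqW {Γ : Type*} [Group Γ] (γ : GammaE Γ) : WG Γ :=
  ⟨SemidirectProduct.inl γ.1, by
    rw [mem_WG]
    constructor
    · convert Set.finite_empty using 1
      ext i; simp
    · have h : (SemidirectProduct.inl γ.1 : W Γ).left = γ.1 := SemidirectProduct.left_inl _
      rw [h]
      exact γ.2⟩

/-- The support of an element of `Γ ≀ 𝔖∞`. -/
def supp {Γ : Type*} [Group Γ] (g : WG Γ) : Set ℕ :=
  {i | (g : W Γ).right i ≠ i ∨ (g : W Γ).left i ≠ 1}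

/-- Positive definiteness of a function on a group. -/
def IsPosDef {G : Type*} [Group G] (φ : G → ℂ) : Prop :=
  ∀ (m : ℕ) (g : Fin m → G) (c : Fin m → ℂ),
    0 ≤ ∑ i, ∑ j, c i * (starRingEnd ℂ) (c j) * φ ((g j)⁻¹ * g i)

/-- A state on a group: normalized positive definite function. -/
def IsState {G : Type*} [Group G] (φ : G → ℂ) : Prop := φ 1 = 1 ∧ IsPosDef φ

/-- `𝔖∞`-centrality of a function on `Γ ≀ 𝔖∞`. -/
def IsSCentral {Γ : Type*} [Group Γ] (φ : WG Γ → ℂ) : Prop :=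
  ∀ (s : SInf) (g : WG Γ), φ (permW s * g * (permW s)⁻¹) = φ g

/-- The commutant of a set of bounded operators. -/
def commutant {H : Type*} [NormedAddCommGroup H] [InnerProductSpace ℂ H]
    (S : Set (H →L[ℂ] H)) : Set (H →L[ℂ] H) := {T | ∀ A ∈ S, T * A = A * T}

variable {Γ : Type*} [Group Γ]
variable {H : Type*} [NormedAddCommGroup H] [InnerProductSpace ℂ H] [CompleteSpace H]

/-- The image set `π(G)` of a representation. -/
def repSet (π : WG Γ →* (H →L[ℂ] H)) : Set (H →L[ℂ] H) := Set.range fun g : WG Γ => π g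

/-- The von Neumann algebra `π(G)''` (double commutant). -/
def vN (π : WG Γ →* (H →L[ℂ] H)) : Set (H →L[ℂ] H) := commutant (commutant (repSet π))

/-- The representation is factorial: the center `π(G)' ∩ π(G)''` consists of scalars. -/
def IsFactorial (π : WG Γ →* (H →L[ℂ] H)) : Prop :=
  ∀ T ∈ commutant (repSet π) ∩ vN π, ∃ c : ℂ, T = c • (1 : H →L[ℂ] H)

/-- `(π, H, ξ)` is a GNS triple for `φ`. -/
structure IsGNS (φ : WG Γ → ℂ) (π : WG Γ →* (H →L[ℂ] H)) (ξ : H) : Prop where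
  unitary : ∀ g, π g ∈ unitary (H →L[ℂ] H)
  norm_one : ‖ξ‖ = 1
  cyclic : Dense ((Submodule.span ℂ (Set.range fun g : WG Γ => π g ξ) : Submodule ℂ H) : Set H)
  inner_eq : ∀ g, φ g = ⟪ξ, π g ξ⟫

theorem swap_mem_SInf (a b : ℕ) : Equiv.swap a b ∈ SInf := by
  rw [mem_SInf]
  refine Set.Finite.subset ((Set.finite_singleton a).insert b) fun i hi => ?_
  simp only [Set.mem_setOf_eq] at hi
  simp only [Set.mem_insert_iff, Set.mem_singleton_iff]
  by_contra h
  push_neg at h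
  exact hi (Equiv.swap_apply_of_ne_of_ne h.2 h.1)

/-- The transposition `(a b)` as an element of `Γ ≀ 𝔖∞`. -/
def swapW {Γ : Type*} [Group Γ] (a b : ℕ) : WG Γ := permW ⟨Equiv.swap a b, swap_mem_SInf a b⟩

def omegaFun (n i : ℕ) : ℕ := if i < n then i + n else if i < 2 * n then i - n else i

theorem omegaFun_invol (n i : ℕ) : omegaFun n (omegaFun n i) = i := by
  unfold omegaFun
  split_ifs <;> first | contradiction | omega

/-- Olshanski's permutation `ω_n`. -/
def omegaPerm (n : ℕ) : Equiv.Perm ℕ :=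
  ⟨omegaFun n, omegaFun n, omegaFun_invol n, omegaFun_invol n⟩

theorem omegaPerm_mem (n : ℕ) : omegaPerm n ∈ SInf := by
  rw [mem_SInf]
  refine Set.Finite.subset (Set.finite_Iio (2 * n)) fun i hi => ?_
  simp only [Set.mem_setOf_eq] at hi
  simp only [Set.mem_Iio]
  by_contra h
  push_neg at h
  apply hi
  show omegaFun n i = i
  unfold omegaFun
  split_ifs <;> first | contradiction | omega

/-- `ω_n` as an element of `Γ ≀ 𝔖∞`. -/
def omegaW {Γ : Type*} [Group Γ] (n : ℕ) : WG Γ := permW ⟨omegaPerm n, omegaPerm_mem n⟩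

def sigmaFun (n i : ℕ) : ℕ := if i + 1 < n then i + 1 else if i + 1 = n then 0 else i

def sigmaInvFun (n i : ℕ) : ℕ := if i < n then (if i = 0 then n - 1 else i - 1) else i

theorem sigma_left_inv (n i : ℕ) : sigmaInvFun n (sigmaFun n i) = i := by
  unfold sigmaFun sigmaInvFun
  split_ifs <;> first | contradiction | omega

theorem sigma_right_inv (n i : ℕ) : sigmaFun n (sigmaInvFun n i) = i := by
  unfold sigmaFun sigmaInvFun
  split_ifs <;> first | contradiction | omega

/-- The cycle `σ_n = (0 1 2 ... n-1)`. -/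
def sigmaPerm (n : ℕ) : Equiv.Perm ℕ :=
  ⟨sigmaFun n, sigmaInvFun n, sigma_left_inv n, sigma_right_inv n⟩

theorem sigmaPerm_mem (n : ℕ) : sigmaPerm n ∈ SInf := by
  rw [mem_SInf]
  refine Set.Finite.subset (Set.finite_Iio n) fun i hi => ?_
  simp only [Set.mem_setOf_eq] at hi
  simp only [Set.mem_Iio]
  by_contra h
  push_neg at h
  apply hi
  show sigmaFun n i = i
  unfold sigmaFun
  split_ifs <;> first | contradiction | omega

/-- The cycle of `s` through the point `i` (the paper's `s_p` for the orbit `p` of `i`). -/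
def cycleAt (s : Equiv.Perm ℕ) (i : ℕ) : Equiv.Perm ℕ where
  toFun j := if s.SameCycle i j then s j else j
  invFun j := if s.SameCycle i j then s⁻¹ j else j
  left_inv j := by
    by_cases h : s.SameCycle i j
    · have h2 : s.SameCycle i (s j) := Equiv.Perm.sameCycle_apply_right.mpr h
      simp [h, h2]
    · simp [h]
  right_inv j := by
    by_cases h : s.SameCycle i j
    · have h2 : s.SameCycle i (s⁻¹ j) := Equiv.Perm.sameCycle_symm_apply_right.mpr h
      simp [h, h2]
    · simp [h]

theorem cycleAt_mem {s : Equiv.Perm ℕ} (hs : s ∈ SInf) (i : ℕ) : cycleAt s i ∈ SInf := by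
  rw [mem_SInf] at hs ⊢
  refine Set.Finite.subset hs fun j hj => ?_
  simp only [Set.mem_setOf_eq] at hj ⊢
  intro h
  apply hj
  show (if s.SameCycle i j then s j else j) = j
  split_ifs with hc
  · exact h
  · rfl

/-- The generalized cycle of `g = sγ` corresponding to the orbit of `i` under `s`. -/
def genCycle {Γ : Type*} [Group Γ] (g : WG Γ) (i : ℕ) : WG Γ :=
  permW ⟨cycleAt (g : W Γ).right i, cycleAt_mem g.2.1 i⟩ *
  seqW ⟨fun k => if ((g : W Γ).right).SameCycle i k then (g : W Γ).left ((g : W Γ).right k)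
      else 1, by
    rw [mem_GammaE]
    refine Set.Finite.subset (Set.Finite.preimage ((g : W Γ).right.injective.injOn) g.2.2)
      fun k hk => ?_
    simp only [Set.mem_setOf_eq] at hk
    simp only [Set.mem_preimage, Set.mem_setOf_eq]
    by_cases hsc : ((g : W Γ).right).SameCycle i k
    · rw [if_pos hsc] at hk; exact hk
    · rw [if_neg hsc] at hk; exact absurd rfl hk⟩

/-- The von Neumann algebra `𝔄_j` generated by `O_j` and the `π(γ)` with `γ` supported at `j`. -/
def Aj (π : WG Γ →* (H →L[ℂ] H)) (O : H →L[ℂ] H) (j : ℕ) : Set (H →L[ℂ] H) :=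
  commutant (commutant
    ({O} ∪ {T | ∃ γ : GammaE Γ, (∀ i, i ≠ j → (γ : ℕ → Γ) i = 1) ∧ T = π (seqW γ)}))


/-! ### Auxiliary lemmas for statement 6 -/

section Aux

variable {Γ : Type*} [Group Γ]

lemma WGext {a b : WG Γ} (hl : (a : W Γ).left = (b : W Γ).left)
    (hr : (a : W Γ).right = (b : W Γ).right) : a = b := by
  apply Subtype.ext
  obtain ⟨⟨al, ar⟩, ha⟩ := a
  obtain ⟨⟨bl, br⟩, hb⟩ := b
  simp only at hl hr
  simp [hl, hr]

lemma fix_inv {r : Equiv.Perm ℕ} {i : ℕ} (h : r i = i) : r⁻¹ i = i := by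
  conv_lhs => rw [← h]
  exact r.symm_apply_apply i

/-- `g` is supported inside `P`. -/
def SuppIn (g : WG Γ) (P : Set ℕ) : Prop :=
  ∀ i, i ∉ P → (g : W Γ).right i = i ∧ (g : W Γ).left i = 1

lemma suppIn_mono {g : WG Γ} {P Q : Set ℕ} (hPQ : P ⊆ Q) (h : SuppIn g P) : SuppIn g Q :=
  fun i hi => h i fun hP => hi (hPQ hP)

lemma exists_suppIn (g : WG Γ) : ∃ N, SuppIn g (Set.Iio N) := by
  obtain ⟨h1, h2⟩ := g.2
  obtain ⟨M, hM⟩ := (h1.union h2).bddAbove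
  refine ⟨M + 1, fun i hi => ?_⟩
  simp only [Set.mem_Iio, not_lt] at hi
  constructor
  · by_contra hc
    exact absurd (hM (Set.mem_union_left _ hc)) (by omega)
  · by_contra hc
    exact absurd (hM (Set.mem_union_right _ hc)) (by omega)

/-- helper: the inverse permutation also fixes points outside `P`. -/
lemma suppIn_inv_fix {g : WG Γ} {P : Set ℕ} (h : SuppIn g P) {i : ℕ}
    (hi : i ∉ P) : ((g : W Γ).right)⁻¹ i = i := fix_inv (h i hi).1

lemma commute_of_suppIn {g h : WG Γ} {P Q : Set ℕ} (hg : SuppIn g P) (hh : SuppIn h Q)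
    (hd : ∀ i, i ∈ P → i ∉ Q) : g * h = h * g := by
  set s := (g : W Γ).right with hs
  set t := (h : W Γ).right with ht
  set γ := (g : W Γ).left with hγ
  set δ := (h : W Γ).left with hδ
  have hsfix : ∀ i, i ∉ P → s i = i := fun i hi => (hg i hi).1
  have htfix : ∀ i, i ∉ Q → t i = i := fun i hi => (hh i hi).1
  have hγ1 : ∀ i, i ∉ P → γ i = 1 := fun i hi => (hg i hi).2
  have hδ1 : ∀ i, i ∉ Q → δ i = 1 := fun i hi => (hh i hi).2
  -- δ ∘ s⁻¹ = δ and γ ∘ t⁻¹ = γ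
  have hds : ∀ i, δ (s⁻¹ i) = δ i := by
    intro i
    by_cases hiP : i ∈ P
    · by_cases hsi : s⁻¹ i ∈ P
      · rw [hδ1 _ (hd _ hsi), hδ1 _ (hd _ hiP)]
      · have : s (s⁻¹ i) = s⁻¹ i := hsfix _ hsi
        rw [show s (s⁻¹ i) = i from s.apply_symm_apply i] at this
        rw [← this]
    · rw [fix_inv (hsfix _ hiP)]
  have hgt : ∀ i, γ (t⁻¹ i) = γ i := by
    intro i
    by_cases hiQ : i ∈ Q
    · by_cases hti : t⁻¹ i ∈ Q
      · rw [hγ1 _ (fun hP => hd _ hP hti), hγ1 _ (fun hP => hd _ hP hiQ)]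
      · have : t (t⁻¹ i) = t⁻¹ i := htfix _ hti
        rw [show t (t⁻¹ i) = i from t.apply_symm_apply i] at this
        rw [← this]
    · rw [fix_inv (htfix _ hiQ)]
  apply WGext
  · show γ * (permAction Γ s) δ = δ * (permAction Γ t) γ
    funext i
    have h1 : ((permAction Γ s) δ) i = δ (s⁻¹ i) := rfl
    have h2 : ((permAction Γ t) γ) i = γ (t⁻¹ i) := rfl
    show γ i * ((permAction Γ s) δ) i = δ i * ((permAction Γ t) γ) i
    rw [h1, h2, hds, hgt]
    by_cases hiP : i ∈ P
    · rw [hδ1 _ (hd _ hiP), mul_one, one_mul]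
    · rw [hγ1 _ hiP, mul_one, one_mul]
  · show s * t = t * s
    ext i
    show s (t i) = t (s i)
    by_cases hiP : i ∈ P
    · rw [htfix _ (hd _ hiP)]
      by_cases hsQ : s i ∈ Q
      · by_cases hsP : s i ∈ P
        · exact absurd hsQ (hd _ hsP)
        · have : s (s i) = s i := hsfix _ hsP
          have h2 : s i = i := s.injective this
          rw [h2, htfix _ (hd _ hiP)]
      · rw [htfix _ hsQ]
    · rw [hsfix _ hiP]
      by_cases htP : t i ∈ P
      · have : t (t i) = t i := htfix _ (hd _ htP)
        have h2 : t i = i := t.injective this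
        rw [h2, hsfix _ hiP]
      · rw [hsfix _ htP]

lemma permW_coe (s : SInf) : ((permW s : WG Γ) : W Γ) = SemidirectProduct.inr s.1 := rfl

lemma conj_right (s : SInf) (g : WG Γ) :
    ((permW s * g * (permW s)⁻¹ : WG Γ) : W Γ).right = s.1 * (g : W Γ).right * s.1⁻¹ := by
  simp [SemidirectProduct.mul_right, permW_coe, SemidirectProduct.right_inr,
    SemidirectProduct.inv_right]

lemma conj_left (s : SInf) (g : WG Γ) :
    ((permW s * g * (permW s)⁻¹ : WG Γ) : W Γ).left = fun i => (g : W Γ).left (s.1⁻¹ i) := by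
  funext i
  have : ((permW s * g * (permW s)⁻¹ : WG Γ) : W Γ).left
      = (SemidirectProduct.inr s.1 * (g : W Γ) * (SemidirectProduct.inr s.1)⁻¹).left := rfl
  rw [this]
  simp only [SemidirectProduct.mul_left, SemidirectProduct.left_inr, SemidirectProduct.inv_left,
    SemidirectProduct.inv_right, SemidirectProduct.right_inr, SemidirectProduct.mul_right,
    map_one, one_mul, inv_one, mul_one]
  rfl

lemma suppIn_conj {g : WG Γ} {P : Set ℕ} (hg : SuppIn g P) (s : SInf) :
    SuppIn (permW s * g * (permW s)⁻¹) {i | s.1⁻¹ i ∈ P} := by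
  intro i hi
  simp only [Set.mem_setOf_eq] at hi
  constructor
  · rw [conj_right]
    show s.1 ((g : W Γ).right (s.1⁻¹ i)) = i
    rw [(hg _ hi).1, show s.1 (s.1⁻¹ i) = i from s.1.apply_symm_apply i]
  · rw [conj_left]
    exact (hg _ hi).2


lemma omegaPerm_apply (n i : ℕ) : omegaPerm n i = omegaFun n i := rfl

lemma omegaPerm_inv_apply (n i : ℕ) : (omegaPerm n)⁻¹ i = omegaFun n i := rfl

lemma omegaPerm_inv (n : ℕ) : (omegaPerm n)⁻¹ = omegaPerm n :=
  Equiv.ext fun _ => rfl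

lemma omegaW_inv (n : ℕ) : (omegaW n : WG Γ)⁻¹ = omegaW n := by
  apply Subtype.ext
  show (SemidirectProduct.inr (omegaPerm n) : W Γ)⁻¹ = SemidirectProduct.inr (omegaPerm n)
  rw [← map_inv, omegaPerm_inv]

lemma omega_conj (n : ℕ) (g : WG Γ) :
    omegaW n * g * omegaW n
      = permW ⟨omegaPerm n, omegaPerm_mem n⟩ * g * (permW ⟨omegaPerm n, omegaPerm_mem n⟩)⁻¹ := by
  have h1 : (omegaW n : WG Γ) = permW ⟨omegaPerm n, omegaPerm_mem n⟩ := rfl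
  conv_rhs => rw [← h1, omegaW_inv]

lemma right_lt_of_suppIn {g : WG Γ} {N : ℕ} (hg : SuppIn g (Set.Iio N)) {i : ℕ} (hi : i < N) :
    (g : W Γ).right i < N := by
  by_contra hc
  push_neg at hc
  have h1 : (g : W Γ).right ((g : W Γ).right i) = (g : W Γ).right i :=
    (hg _ (by simpa using hc)).1
  have := (g : W Γ).right.injective h1
  omega

lemma suppIn_omega_conj {g : WG Γ} {N n : ℕ} (hg : SuppIn g (Set.Iio N)) (hn : N ≤ n) :
    SuppIn (omegaW n * g * omegaW n) (Set.Ico n (n + N)) := by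
  rw [omega_conj]
  refine suppIn_mono ?_ (suppIn_conj hg _)
  intro i hi
  simp only [Set.mem_setOf_eq, omegaPerm_inv_apply, Set.mem_Iio] at hi
  simp only [Set.mem_Ico]
  unfold omegaFun at hi
  split_ifs at hi <;> omega

lemma gn_right_formula {g : WG Γ} {N n : ℕ} (hg : SuppIn g (Set.Iio N)) (hn : N ≤ n)
    {j : ℕ} (hj : j < N) :
    ((omegaW n * g * omegaW n : WG Γ) : W Γ).right (n + j) = n + (g : W Γ).right j := by
  rw [omega_conj, conj_right]
  have e1 : (omegaPerm n)⁻¹ (n + j) = j := by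
    rw [omegaPerm_inv_apply]; unfold omegaFun; split_ifs <;> omega
  have hrj : (g : W Γ).right j < N := right_lt_of_suppIn hg hj
  have e2 : omegaPerm n ((g : W Γ).right j) = n + (g : W Γ).right j := by
    rw [omegaPerm_apply]; unfold omegaFun; split_ifs <;> omega
  show omegaPerm n ((g : W Γ).right ((omegaPerm n)⁻¹ (n + j))) = _
  rw [e1, e2]

lemma gn_left_formula {g : WG Γ} {N n : ℕ} (hg : SuppIn g (Set.Iio N)) (hn : N ≤ n)
    {j : ℕ} (hj : j < N) :
    ((omegaW n * g * omegaW n : WG Γ) : W Γ).left (n + j) = (g : W Γ).left j := by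
  rw [omega_conj, conj_left]
  have e1 : (omegaPerm n)⁻¹ (n + j) = j := by
    rw [omegaPerm_inv_apply]; unfold omegaFun; split_ifs <;> omega
  show (g : W Γ).left ((omegaPerm n)⁻¹ (n + j)) = _
  rw [e1]

def tauFun (n m N i : ℕ) : ℕ :=
  if n + N ≤ m then
    (if n ≤ i ∧ i < n + N then i - n + m else if m ≤ i ∧ i < m + N then i - m + n else i)
  else i

lemma tauFun_invol (n m N i : ℕ) : tauFun n m N (tauFun n m N i) = i := by
  unfold tauFun
  split_ifs <;> omega

def tauPerm (n m N : ℕ) : Equiv.Perm ℕ :=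
  ⟨tauFun n m N, tauFun n m N, tauFun_invol n m N, tauFun_invol n m N⟩

lemma tauPerm_apply (n m N i : ℕ) : tauPerm n m N i = tauFun n m N i := rfl

lemma tauPerm_inv_apply (n m N i : ℕ) : (tauPerm n m N)⁻¹ i = tauFun n m N i := rfl

lemma tauPerm_mem (n m N : ℕ) : tauPerm n m N ∈ SInf := by
  rw [mem_SInf]
  refine Set.Finite.subset (Set.finite_Iio (m + N)) fun i hi => ?_
  simp only [Set.mem_setOf_eq] at hi
  simp only [Set.mem_Iio]
  by_contra h
  push_neg at h
  apply hi
  show tauFun n m N i = i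
  unfold tauFun
  split_ifs <;> omega

def tauS (n m N : ℕ) : SInf := ⟨tauPerm n m N, tauPerm_mem n m N⟩

lemma suppIn_tauW (n m N : ℕ) :
    SuppIn (permW (tauS n m N) : WG Γ) (Set.Ico n (n + N) ∪ Set.Ico m (m + N)) := by
  intro i hi
  simp only [Set.mem_union, Set.mem_Ico, not_or, not_and, not_lt] at hi
  constructor
  · show tauPerm n m N i = i
    rw [tauPerm_apply]
    unfold tauFun
    split_ifs <;> omega
  · rfl

lemma tau_conj {g : WG Γ} {N n m : ℕ} (hg : SuppIn g (Set.Iio N)) (hn : N ≤ n)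
    (hm : 2 * n ≤ m) :
    permW (tauS n m N) * (omegaW n * g * omegaW n) * (permW (tauS n m N))⁻¹
      = omegaW m * g * omegaW m := by
  have hNm : N ≤ m := by omega
  have hnm : n + N ≤ m := by omega
  have hsn := suppIn_omega_conj hg hn
  have hsm := suppIn_omega_conj hg hNm
  have htau_out : ∀ i : ℕ, i ∉ Set.Ico m (m + N) → tauFun n m N i ∉ Set.Ico n (n + N) := by
    intro i hi
    simp only [Set.mem_Ico, not_and, not_lt] at hi ⊢
    unfold tauFun
    split_ifs <;> omega
  apply WGext
  · rw [conj_left]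
    funext i
    show ((omegaW n * g * omegaW n : WG Γ) : W Γ).left ((tauPerm n m N)⁻¹ i) = _
    rw [tauPerm_inv_apply]
    by_cases hi : i ∈ Set.Ico m (m + N)
    · simp only [Set.mem_Ico] at hi
      obtain ⟨j, hj, rfl⟩ : ∃ j, j < N ∧ i = m + j := ⟨i - m, by omega, by omega⟩
      have e1 : tauFun n m N (m + j) = n + j := by unfold tauFun; split_ifs <;> omega
      rw [e1, gn_left_formula hg hn hj, gn_left_formula hg hNm hj]
    · rw [(hsn _ (htau_out i hi)).2, (hsm _ hi).2]
  · rw [conj_right]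
    ext i
    show tauPerm n m N (((omegaW n * g * omegaW n : WG Γ) : W Γ).right ((tauPerm n m N)⁻¹ i))
        = ((omegaW m * g * omegaW m : WG Γ) : W Γ).right i
    rw [tauPerm_inv_apply]
    by_cases hi : i ∈ Set.Ico m (m + N)
    · simp only [Set.mem_Ico] at hi
      obtain ⟨j, hj, rfl⟩ : ∃ j, j < N ∧ i = m + j := ⟨i - m, by omega, by omega⟩
      have e1 : tauFun n m N (m + j) = n + j := by unfold tauFun; split_ifs <;> omega
      rw [e1, gn_right_formula hg hn hj, gn_right_formula hg hNm hj]
      have hrj : (g : W Γ).right j < N := right_lt_of_suppIn hg hj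
      rw [tauPerm_apply]
      unfold tauFun
      split_ifs <;> omega
    · rw [(hsn _ (htau_out i hi)).1, (hsm _ hi).1, tauPerm_apply, tauFun_invol]


lemma suppIn_inv {g : WG Γ} {P : Set ℕ} (hg : SuppIn g P) : SuppIn g⁻¹ P := by
  intro i hi
  have hcoe : ((g⁻¹ : WG Γ) : W Γ) = ((g : WG Γ) : W Γ)⁻¹ := rfl
  constructor
  · rw [hcoe, SemidirectProduct.inv_right]
    exact fix_inv (hg i hi).1
  · rw [hcoe, SemidirectProduct.inv_left]
    show ((g : W Γ).left⁻¹) ((((g : W Γ).right⁻¹)⁻¹ : Equiv.Perm ℕ) i) = 1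
    rw [inv_inv]
    show ((g : W Γ).left ((g : W Γ).right i))⁻¹ = 1
    rw [(hg i hi).1, (hg i hi).2, inv_one]

lemma phi_step {φ : WG Γ → ℂ} (hcentral : IsSCentral φ) {g h h' : WG Γ} {N K n m : ℕ}
    (hg : SuppIn g (Set.Iio N)) (hh : SuppIn h (Set.Iio K)) (hh' : SuppIn h' (Set.Iio K))
    (hN : N ≤ n) (hK : K ≤ n) (hm : 2 * n ≤ m) :
    φ (h' * (omegaW n * g * omegaW n) * h) = φ (h' * (omegaW m * g * omegaW m) * h) := by
  have key := hcentral (tauS n m N) (h' * (omegaW n * g * omegaW n) * h)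
  have hd : ∀ i, i ∈ Set.Ico n (n + N) ∪ Set.Ico m (m + N) → i ∉ Set.Iio K := by
    intro i hi
    simp only [Set.mem_union, Set.mem_Ico] at hi
    simp only [Set.mem_Iio, not_lt]
    omega
  have ch' : permW (tauS n m N) * h' = h' * permW (tauS n m N) :=
    commute_of_suppIn (suppIn_tauW n m N) hh' hd
  have ch : permW (tauS n m N) * h = h * permW (tauS n m N) :=
    commute_of_suppIn (suppIn_tauW n m N) hh hd
  have r1 : permW (tauS n m N) * h' * (permW (tauS n m N))⁻¹ = h' := by
    rw [ch', mul_inv_cancel_right]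
  have r2 : permW (tauS n m N) * h * (permW (tauS n m N))⁻¹ = h := by
    rw [ch, mul_inv_cancel_right]
  have r3 := tau_conj hg hN hm
  have e : permW (tauS n m N) * (h' * (omegaW n * g * omegaW n) * h) * (permW (tauS n m N))⁻¹
      = (permW (tauS n m N) * h' * (permW (tauS n m N))⁻¹)
        * (permW (tauS n m N) * (omegaW n * g * omegaW n) * (permW (tauS n m N))⁻¹)
        * (permW (tauS n m N) * h * (permW (tauS n m N))⁻¹) := by
    group
  rw [← key, e, r1, r2, r3]

lemma phi_const {φ : WG Γ → ℂ} (hcentral : IsSCentral φ) {g h h' : WG Γ} {N K n n' : ℕ}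
    (hg : SuppIn g (Set.Iio N)) (hh : SuppIn h (Set.Iio K)) (hh' : SuppIn h' (Set.Iio K))
    (hn : max N K ≤ n) (hn' : max N K ≤ n') :
    φ (h' * (omegaW n * g * omegaW n) * h) = φ (h' * (omegaW n' * g * omegaW n') * h) := by
  have h1 := phi_step hcentral hg hh hh' (le_trans (le_max_left _ _) hn)
    (le_trans (le_max_right _ _) hn) (show 2 * n ≤ 2 * n + 2 * n' by omega)
  have h2 := phi_step hcentral hg hh hh' (le_trans (le_max_left _ _) hn')
    (le_trans (le_max_right _ _) hn') (show 2 * n' ≤ 2 * n + 2 * n' by omega)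
  rw [h1, h2]


variable {H : Type*} [NormedAddCommGroup H] [InnerProductSpace ℂ H] [CompleteSpace H]

lemma pi_adjoint {π : WG Γ →* (H →L[ℂ] H)} (hu : ∀ g, π g ∈ unitary (H →L[ℂ] H)) (g : WG Γ) :
    ContinuousLinearMap.adjoint (π g) = π g⁻¹ := by
  have h1 : star (π g) * π g = 1 := (Unitary.mem_iff.mp (hu g)).1
  have h2 : π g * π g⁻¹ = 1 := by rw [← map_mul, mul_inv_cancel, map_one]
  rw [← ContinuousLinearMap.star_eq_adjoint]
  calc star (π g) = star (π g) * (π g * π g⁻¹) := by rw [h2, mul_one]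
  _ = (star (π g) * π g) * π g⁻¹ := by rw [mul_assoc]
  _ = π g⁻¹ := by rw [h1, one_mul]

lemma pi_norm_map {π : WG Γ →* (H →L[ℂ] H)} (hu : ∀ g, π g ∈ unitary (H →L[ℂ] H))
    (g : WG Γ) (z : H) : ‖π g z‖ = ‖z‖ := by
  have h1 : π g⁻¹ * π g = 1 := by rw [← map_mul, inv_mul_cancel, map_one]
  have h2 : ⟪π g z, π g z⟫ = ⟪z, z⟫ := by
    rw [← ContinuousLinearMap.adjoint_inner_right, pi_adjoint hu]
    have h3 : (π g⁻¹) ((π g) z) = z := by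
      rw [← ContinuousLinearMap.mul_apply, h1, ContinuousLinearMap.one_apply]
    rw [h3]
  have h4 : (‖π g z‖ : ℝ) ^ 2 = ‖z‖ ^ 2 := by
    rw [← @inner_self_eq_norm_sq ℂ, ← @inner_self_eq_norm_sq ℂ, h2]
  exact (sq_eq_sq₀ (norm_nonneg _) (norm_nonneg _)).mp h4

lemma pi_inner_bound {π : WG Γ →* (H →L[ℂ] H)} (hu : ∀ g, π g ∈ unitary (H →L[ℂ] H))
    (g : WG Γ) (y z : H) : ‖⟪y, π g z⟫‖ ≤ ‖y‖ * ‖z‖ := by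
  calc ‖⟪y, π g z⟫‖ ≤ ‖y‖ * ‖π g z‖ := norm_inner_le_norm y _
  _ = ‖y‖ * ‖z‖ := by rw [pi_norm_map hu]


lemma spanning_ev_const {φ : WG Γ → ℂ} {π : WG Γ →* (H →L[ℂ] H)} {ξ : H}
    (hcentral : IsSCentral φ) (hGNS : IsGNS φ π ξ) (g h h' : WG Γ) :
    ∃ c : ℂ, ∀ᶠ n in atTop, ⟪π h' ξ, π (omegaW n * g * omegaW n) (π h ξ)⟫ = c := by
  obtain ⟨N, hg⟩ := exists_suppIn g
  obtain ⟨K1, hh1⟩ := exists_suppIn h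
  obtain ⟨K2, hh2⟩ := exists_suppIn h'
  have hh : SuppIn h (Set.Iio (max K1 K2)) :=
    suppIn_mono (Set.Iio_subset_Iio (le_max_left _ _)) hh1
  have hh' : SuppIn h'⁻¹ (Set.Iio (max K1 K2)) :=
    suppIn_inv (suppIn_mono (Set.Iio_subset_Iio (le_max_right _ _)) hh2)
  have inner_eq : ∀ n : ℕ, ⟪π h' ξ, π (omegaW n * g * omegaW n) (π h ξ)⟫
      = φ (h'⁻¹ * (omegaW n * g * omegaW n) * h) := by
    intro n
    rw [hGNS.inner_eq]
    conv_rhs => rw [map_mul, map_mul, ContinuousLinearMap.mul_apply,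
      ContinuousLinearMap.mul_apply]
    rw [← pi_adjoint hGNS.unitary, ContinuousLinearMap.adjoint_inner_right]
  refine ⟨φ (h'⁻¹ * (omegaW (max N (max K1 K2)) * g * omegaW (max N (max K1 K2))) * h), ?_⟩
  filter_upwards [eventually_ge_atTop (max N (max K1 K2))] with n hn
  rw [inner_eq n]
  exact phi_const hcentral hg hh hh' hn le_rfl

lemma span_lim {φ : WG Γ → ℂ} {π : WG Γ →* (H →L[ℂ] H)} {ξ : H}
    (hcentral : IsSCentral φ) (hGNS : IsGNS φ π ξ) (g : WG Γ) :
    ∀ x' ∈ Submodule.span ℂ (Set.range fun h : WG Γ => π h ξ),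
    ∀ y' ∈ Submodule.span ℂ (Set.range fun h : WG Γ => π h ξ),
    ∃ c : ℂ, Tendsto (fun n => ⟪y', π (omegaW n * g * omegaW n) x'⟫) atTop (𝓝 c) := by
  intro a ha b hb
  refine Submodule.span_induction₂
    (p := fun x y _ _ =>
      ∃ c : ℂ, Tendsto (fun n => ⟪y, π (omegaW n * g * omegaW n) x⟫) atTop (𝓝 c))
    ?_ ?_ ?_ ?_ ?_ ?_ ?_ ha hb
  · rintro x y ⟨h, rfl⟩ ⟨h', rfl⟩
    obtain ⟨c, hc⟩ := spanning_ev_const hcentral hGNS g h h'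
    exact ⟨c, Tendsto.congr' (hc.mono fun n e => e.symm) tendsto_const_nhds⟩
  · intro y _
    refine ⟨0, Tendsto.congr (fun n => ?_) tendsto_const_nhds⟩
    rw [map_zero, inner_zero_right]
  · intro x _
    refine ⟨0, Tendsto.congr (fun n => ?_) tendsto_const_nhds⟩
    rw [inner_zero_left]
  · rintro x y z _ _ _ ⟨c1, h1⟩ ⟨c2, h2⟩
    refine ⟨c1 + c2, (h1.add h2).congr fun n => ?_⟩
    rw [map_add, inner_add_right]
  · rintro x y z _ _ _ ⟨c1, h1⟩ ⟨c2, h2⟩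
    refine ⟨c1 + c2, (h1.add h2).congr fun n => ?_⟩
    rw [inner_add_left]
  · rintro r x y _ _ ⟨c, hc⟩
    refine ⟨r * c, (hc.const_mul r).congr fun n => ?_⟩
    rw [map_smul, inner_smul_right]
  · rintro r x y _ _ ⟨c, hc⟩
    refine ⟨(starRingEnd ℂ) r * c, (hc.const_mul _).congr fun n => ?_⟩
    rw [inner_smul_left]

lemma all_lim {φ : WG Γ → ℂ} {π : WG Γ →* (H →L[ℂ] H)} {ξ : H}
    (hcentral : IsSCentral φ) (hGNS : IsGNS φ π ξ) (g : WG Γ) (x y : H) :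
    ∃ c : ℂ, Tendsto (fun n => ⟪y, π (omegaW n * g * omegaW n) x⟫) atTop (𝓝 c) := by
  have hb : ∀ (n : ℕ) (x1 x2 y1 y2 : H),
      ‖⟪y1, π (omegaW n * g * omegaW n) x1⟫ - ⟪y2, π (omegaW n * g * omegaW n) x2⟫‖
        ≤ ‖y1‖ * ‖x1 - x2‖ + ‖y1 - y2‖ * ‖x2‖ := by
    intro n x1 x2 y1 y2
    have e : ⟪y1, π (omegaW n * g * omegaW n) x1⟫ - ⟪y2, π (omegaW n * g * omegaW n) x2⟫
        = ⟪y1, π (omegaW n * g * omegaW n) (x1 - x2)⟫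
          + ⟪y1 - y2, π (omegaW n * g * omegaW n) x2⟫ := by
      rw [map_sub, inner_sub_right, inner_sub_left]
      ring
    rw [e]
    refine le_trans (norm_add_le _ _) (add_le_add ?_ ?_)
    · calc ‖⟪y1, π (omegaW n * g * omegaW n) (x1 - x2)⟫‖
          ≤ ‖y1‖ * ‖π (omegaW n * g * omegaW n) (x1 - x2)‖ := norm_inner_le_norm _ _
      _ = ‖y1‖ * ‖x1 - x2‖ := by rw [pi_norm_map hGNS.unitary]
    · calc ‖⟪y1 - y2, π (omegaW n * g * omegaW n) x2⟫‖
          ≤ ‖y1 - y2‖ * ‖π (omegaW n * g * omegaW n) x2‖ := norm_inner_le_norm _ _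
      _ = ‖y1 - y2‖ * ‖x2‖ := by rw [pi_norm_map hGNS.unitary]
  apply cauchySeq_tendsto_of_complete
  rw [Metric.cauchySeq_iff]
  intro ε hε
  have hdense := hGNS.cyclic
  obtain ⟨x', hx'D, hx'⟩ : ∃ x' ∈ Submodule.span ℂ (Set.range fun h : WG Γ => π h ξ),
      ‖y‖ * ‖x - x'‖ < ε / 8 := by
    obtain ⟨x', hx'D, hd⟩ := Metric.mem_closure_iff.mp (hdense x) (ε / 8 / (‖y‖ + 1))
      (by positivity)
    refine ⟨x', hx'D, ?_⟩
    rw [dist_eq_norm] at hd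
    have h1 : ‖y‖ * ‖x - x'‖ ≤ (‖y‖ + 1) * ‖x - x'‖ :=
      mul_le_mul_of_nonneg_right (by linarith [norm_nonneg y]) (norm_nonneg _)
    have h2 : (‖y‖ + 1) * ‖x - x'‖ < (‖y‖ + 1) * (ε / 8 / (‖y‖ + 1)) :=
      mul_lt_mul_of_pos_left hd (by positivity)
    have h3 : (‖y‖ + 1) * (ε / 8 / (‖y‖ + 1)) = ε / 8 := by
      field_simp
    linarith
  obtain ⟨y', hy'D, hy'⟩ : ∃ y' ∈ Submodule.span ℂ (Set.range fun h : WG Γ => π h ξ),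
      ‖y - y'‖ * ‖x'‖ < ε / 8 := by
    obtain ⟨y', hy'D, hd⟩ := Metric.mem_closure_iff.mp (hdense y) (ε / 8 / (‖x'‖ + 1))
      (by positivity)
    refine ⟨y', hy'D, ?_⟩
    rw [dist_eq_norm] at hd
    have h1 : ‖y - y'‖ * ‖x'‖ ≤ ‖y - y'‖ * (‖x'‖ + 1) :=
      mul_le_mul_of_nonneg_left (by linarith [norm_nonneg x']) (norm_nonneg _)
    have h2 : ‖y - y'‖ * (‖x'‖ + 1) < (ε / 8 / (‖x'‖ + 1)) * (‖x'‖ + 1) :=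
      mul_lt_mul_of_pos_right hd (by positivity)
    have h3 : (ε / 8 / (‖x'‖ + 1)) * (‖x'‖ + 1) = ε / 8 := by
      field_simp
    linarith
  have hclose : ∀ n : ℕ, ‖⟪y, π (omegaW n * g * omegaW n) x⟫
      - ⟪y', π (omegaW n * g * omegaW n) x'⟫‖ < ε / 4 := by
    intro n
    have := hb n x x' y y'
    have h4 : ‖y‖ * ‖x - x'‖ + ‖y - y'‖ * ‖x'‖ < ε / 4 := by linarith
    linarith
  obtain ⟨c, hc⟩ := span_lim hcentral hGNS g x' hx'D y' hy'D
  rw [Metric.tendsto_atTop] at hc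
  obtain ⟨n₀, hn₀⟩ := hc (ε / 8) (by positivity)
  refine ⟨n₀, fun p hp q hq => ?_⟩
  have d1 : dist (⟪y, π (omegaW p * g * omegaW p) x⟫) (⟪y', π (omegaW p * g * omegaW p) x'⟫)
      < ε / 4 := by rw [dist_eq_norm]; exact hclose p
  have d2 : dist (⟪y', π (omegaW p * g * omegaW p) x'⟫) (⟪y', π (omegaW q * g * omegaW q) x'⟫)
      ≤ dist (⟪y', π (omegaW p * g * omegaW p) x'⟫) c
        + dist c (⟪y', π (omegaW q * g * omegaW q) x'⟫) := dist_triangle _ _ _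
  have d3 : dist (⟪y', π (omegaW q * g * omegaW q) x'⟫) (⟪y, π (omegaW q * g * omegaW q) x⟫)
      < ε / 4 := by rw [dist_comm, dist_eq_norm]; exact hclose q
  have d4 := hn₀ p hp
  have d5 := hn₀ q hq
  rw [dist_comm] at d5
  calc dist (⟪y, π (omegaW p * g * omegaW p) x⟫) (⟪y, π (omegaW q * g * omegaW q) x⟫)
      ≤ dist (⟪y, π (omegaW p * g * omegaW p) x⟫) (⟪y', π (omegaW p * g * omegaW p) x'⟫)
        + dist (⟪y', π (omegaW p * g * omegaW p) x'⟫) (⟪y', π (omegaW q * g * omegaW q) x'⟫)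
        + dist (⟪y', π (omegaW q * g * omegaW q) x'⟫) (⟪y, π (omegaW q * g * omegaW q) x⟫) :=
        dist_triangle4 _ _ _ _
  _ < ε / 4 + (ε / 8 + ε / 8) + ε / 4 := by
      have := lt_of_le_of_lt d2 (add_lt_add d4 d5)
      linarith
  _ < ε := by linarith

end Aux

theorem statement_6 {Γ : Type*} [Group Γ] {H : Type*} [NormedAddCommGroup H]
    [InnerProductSpace ℂ H] [CompleteSpace H]
    (φ : WG Γ → ℂ) (hstate : IsState φ) (hcentral : IsSCentral φ)
    (π : WG Γ →* (H →L[ℂ] H)) (ξ : H) (hGNS : IsGNS φ π ξ)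
    (hfact : IsFactorial π) :
    ∀ (g : WG Γ) (x y : H),
      Tendsto (fun n => ⟪y, π (omegaW n * g * omegaW n) x⟫) atTop
        (𝓝 (φ g * ⟪y, x⟫)) := by
  intro g x y
  obtain ⟨N, hg⟩ := exists_suppIn g
  choose L hL using all_lim hcentral hGNS g
  set A : ℕ → (H →L[ℂ] H) := fun n => π (omegaW n * g * omegaW n) with hAdef
  have hL' : ∀ x y, Tendsto (fun n => ⟪y, A n x⟫) atTop (𝓝 (L x y)) := hL
  have hLadd_y : ∀ x y y', L x (y + y') = L x y + L x y' := fun x y y' =>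
    tendsto_nhds_unique (hL' x (y + y'))
      (((hL' x y).add (hL' x y')).congr fun n => (inner_add_left _ _ _).symm)
  have hLsmul_y : ∀ (c : ℂ) (x y), L x (c • y) = (starRingEnd ℂ) c * L x y := fun c x y =>
    tendsto_nhds_unique (hL' x (c • y))
      (((hL' x y).const_mul _).congr fun n => (inner_smul_left _ _ _).symm)
  have hLadd_x : ∀ x x' y, L (x + x') y = L x y + L x' y := fun x x' y =>
    tendsto_nhds_unique (hL' (x + x') y)
      (((hL' x y).add (hL' x' y)).congr fun n => by rw [map_add, inner_add_right])
  have hLsmul_x : ∀ (c : ℂ) (x y), L (c • x) y = c * L x y := fun c x y =>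
    tendsto_nhds_unique (hL' (c • x) y)
      (((hL' x y).const_mul c).congr fun n => by rw [map_smul, inner_smul_right])
  have hLbound : ∀ x y, ‖(starRingEnd ℂ) (L x y)‖ ≤ ‖x‖ * ‖y‖ := by
    intro x y
    rw [RCLike.norm_conj]
    refine le_of_tendsto (hL' x y).norm (Filter.Eventually.of_forall fun n => ?_)
    calc ‖⟪y, A n x⟫‖ ≤ ‖y‖ * ‖A n x‖ := norm_inner_le_norm _ _
    _ = ‖y‖ * ‖x‖ := by rw [pi_norm_map hGNS.unitary]
    _ = ‖x‖ * ‖y‖ := mul_comm _ _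
  let F : H → (H →L[ℂ] ℂ) := fun x => LinearMap.mkContinuous
    { toFun := fun y => (starRingEnd ℂ) (L x y)
      map_add' := fun y y' => by simp only [hLadd_y, map_add]
      map_smul' := fun c v => by
        simp only [hLsmul_y, map_mul, RingHom.id_apply, smul_eq_mul]
        rw [Complex.conj_conj] }
    ‖x‖ (fun y => hLbound x y)
  have hFapp : ∀ x v, F x v = (starRingEnd ℂ) (L x v) := fun x v => rfl
  let Tfun : H → H := fun x => (InnerProductSpace.toDual ℂ H).symm (F x)
  have hT1 : ∀ x v, ⟪Tfun x, v⟫ = (starRingEnd ℂ) (L x v) := fun x v => by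
    rw [show Tfun x = (InnerProductSpace.toDual ℂ H).symm (F x) from rfl,
      InnerProductSpace.toDual_symm_apply]
    exact hFapp x v
  have hT2 : ∀ x v, ⟪v, Tfun x⟫ = L x v := fun x v => by
    rw [← inner_conj_symm, hT1, Complex.conj_conj]
  have hTlim : ∀ x v, Tendsto (fun n => ⟪v, A n x⟫) atTop (𝓝 ⟪v, Tfun x⟫) := fun x v => by
    rw [hT2]; exact hL' x v
  have hTadd : ∀ x x', Tfun (x + x') = Tfun x + Tfun x' := fun x x' =>
    ext_inner_left ℂ fun v => by rw [hT2, inner_add_right, hT2, hT2, hLadd_x]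
  have hTsmul : ∀ (c : ℂ) (x), Tfun (c • x) = c • Tfun x := fun c x =>
    ext_inner_left ℂ fun v => by rw [hT2, inner_smul_right, hT2, hLsmul_x]
  have hTnorm : ∀ x, ‖Tfun x‖ ≤ 1 * ‖x‖ := fun x => by
    rw [one_mul]
    calc ‖Tfun x‖ = ‖F x‖ := LinearIsometryEquiv.norm_map _ _
    _ ≤ ‖x‖ := LinearMap.mkContinuous_norm_le _ (norm_nonneg x) _
  let T : H →L[ℂ] H := LinearMap.mkContinuous
    { toFun := Tfun
      map_add' := hTadd
      map_smul' := fun c x => by rw [RingHom.id_apply]; exact hTsmul c x } 1 hTnorm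
  have hTapp : ∀ x, T x = Tfun x := fun x => rfl
  -- T is in the commutant of π(G)
  have hcomm : T ∈ commutant (repSet π) := by
    rintro B ⟨h, rfl⟩
    ext z
    refine ext_inner_left ℂ fun v => ?_
    have e1 : (T * (π h)) z = Tfun ((π h) z) := rfl
    have e2 : ((π h) * T) z = (π h) (Tfun z) := rfl
    rw [e1, e2, hT2]
    obtain ⟨K, hh⟩ := exists_suppIn h
    have hev : ∀ᶠ n in atTop, ⟪v, A n ((π h) z)⟫ = ⟪(π h⁻¹) v, A n z⟫ := by
      filter_upwards [eventually_ge_atTop (max N K)] with n hn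
      have hN' : N ≤ n := le_trans (le_max_left _ _) hn
      have hK' : K ≤ n := le_trans (le_max_right _ _) hn
      have hcom : (omegaW n * g * omegaW n) * h = h * (omegaW n * g * omegaW n) :=
        commute_of_suppIn (suppIn_omega_conj hg hN') hh (by
          intro i hi
          simp only [Set.mem_Ico] at hi
          simp only [Set.mem_Iio, not_lt]
          omega)
      have e3 : A n ((π h) z) = (π h) (A n z) := by
        show (π (omegaW n * g * omegaW n)) ((π h) z) = (π h) ((π (omegaW n * g * omegaW n)) z)
        rw [← ContinuousLinearMap.mul_apply, ← map_mul, hcom, map_mul,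
          ContinuousLinearMap.mul_apply]
      rw [e3, ← pi_adjoint hGNS.unitary, ContinuousLinearMap.adjoint_inner_left]
    have t1 : Tendsto (fun n => ⟪v, A n ((π h) z)⟫) atTop (𝓝 (L ((π h) z) v)) := hL' _ _
    have t2 : Tendsto (fun n => ⟪v, A n ((π h) z)⟫) atTop (𝓝 ⟪(π h⁻¹) v, Tfun z⟫) :=
      (hTlim z ((π h⁻¹) v)).congr' (hev.mono fun n e => e.symm)
    rw [tendsto_nhds_unique t1 t2, ← pi_adjoint hGNS.unitary,
      ContinuousLinearMap.adjoint_inner_left]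
  -- T is in the double commutant
  have hvN : T ∈ vN π := by
    intro S hS
    ext z
    refine ext_inner_left ℂ fun v => ?_
    have e1 : (T * S) z = Tfun (S z) := rfl
    have e2 : (S * T) z = S (Tfun z) := rfl
    rw [e1, e2, hT2]
    have hSA : ∀ n, S (A n z) = A n (S z) := by
      intro n
      have hmem : A n ∈ repSet π := ⟨omegaW n * g * omegaW n, rfl⟩
      have := hS (A n) hmem
      calc S (A n z) = (S * A n) z := rfl
      _ = (A n * S) z := by rw [this]
      _ = A n (S z) := rfl
    have t1 : Tendsto (fun n => ⟪v, A n (S z)⟫) atTop (𝓝 (L (S z) v)) := hL' _ _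
    have t2 : Tendsto (fun n => ⟪v, A n (S z)⟫) atTop
        (𝓝 ⟪ContinuousLinearMap.adjoint S v, Tfun z⟫) := by
      refine (hTlim z (ContinuousLinearMap.adjoint S v)).congr fun n => ?_
      rw [ContinuousLinearMap.adjoint_inner_left, hSA]
    rw [tendsto_nhds_unique t1 t2, ContinuousLinearMap.adjoint_inner_left]
  obtain ⟨c, hc⟩ := hfact T ⟨hcomm, hvN⟩
  -- identify the constant
  have hξconst : ∀ n : ℕ, ⟪ξ, A n ξ⟫ = φ g := by
    intro n
    show ⟪ξ, (π (omegaW n * g * omegaW n)) ξ⟫ = φ g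
    rw [← hGNS.inner_eq, omega_conj]
    exact hcentral ⟨omegaPerm n, omegaPerm_mem n⟩ g
  have hξlim : Tendsto (fun n => ⟪ξ, A n ξ⟫) atTop (𝓝 (φ g)) :=
    Tendsto.congr (fun n => (hξconst n).symm) tendsto_const_nhds
  have hTξ : ⟪ξ, Tfun ξ⟫ = φ g := tendsto_nhds_unique (hTlim ξ ξ) hξlim
  have hξξ : ⟪ξ, ξ⟫ = 1 := by
    rw [inner_self_eq_norm_sq_to_K, hGNS.norm_one]
    norm_num
  have hcval : c = φ g := by
    have e : Tfun ξ = c • ξ := by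
      rw [← hTapp, hc]
      simp [ContinuousLinearMap.smul_apply, ContinuousLinearMap.one_apply]
    rw [e, inner_smul_right, hξξ, mul_one] at hTξ
    exact hTξ
  have final : ⟪y, Tfun x⟫ = φ g * ⟪y, x⟫ := by
    have e : Tfun x = c • x := by
      rw [← hTapp, hc]
      simp [ContinuousLinearMap.smul_apply, ContinuousLinearMap.one_apply]
    rw [e, inner_smul_right, hcval]
  have := hTlim x y
  rw [final] at this
  exact this

end DN
end
end

section
/- Let φ be an 𝔖∞-central state on G = Γ≀𝔖∞ with GNS triple (π, H, ξ). Then for every i ∈ ℕ there exists a bounded self-adjoint operator O_i on H with ‖O_i‖ ≤ 1 such that for all x, y ∈ H, ⟨π((i j))x, y⟩ → ⟨O_i x, y⟩ as j → ∞ (j ranging over ℕ∖{i}), where (i j) ∈ 𝔖∞ denotes the transposition of i and j; i.e. the weak operator limit of π((i j)) as j → ∞ exists. -/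
open scoped Classical ComplexOrder
open Filter Topology

noncomputable section

namespace DN

local notation "⟪" x ", " y "⟫" => @inner ℂ _ _ x y

variable {Γ : Type*} [Group Γ]
variable {H : Type*} [NormedAddCommGroup H] [InnerProductSpace ℂ H] [CompleteSpace H]

theorem permW_mul {Γ : Type*} [Group Γ] (s t : SInf) :
    (permW s : WG Γ) * permW t = permW (s * t) :=
  Subtype.ext (map_mul (SemidirectProduct.inr) s.1 t.1).symm

theorem permW_one {Γ : Type*} [Group Γ] : (permW (1 : SInf) : WG Γ) = 1 :=
  Subtype.ext (map_one (SemidirectProduct.inr))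

theorem permW_inv {Γ : Type*} [Group Γ] (s : SInf) :
    (permW s : WG Γ)⁻¹ = permW s⁻¹ :=
  Subtype.ext (map_inv (SemidirectProduct.inr) s.1).symm

theorem swapW_mul_self {Γ : Type*} [Group Γ] (a b : ℕ) :
    (swapW a b : WG Γ) * swapW a b = 1 := by
  rw [swapW, permW_mul]
  have : (⟨Equiv.swap a b, swap_mem_SInf a b⟩ : SInf) * ⟨Equiv.swap a b, swap_mem_SInf a b⟩ = 1 :=
    Subtype.ext (Equiv.swap_mul_self a b)
  rw [this, permW_one]

/-- `permW σ` commutes with any `w` whose support avoids the support of `σ`. -/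
theorem permW_comm {Γ : Type*} [Group Γ] (σ : SInf) (w : WG Γ)
    (hfix : ∀ n, σ.1 n ≠ n → (w : W Γ).right n = n ∧ (w : W Γ).left n = 1) :
    (permW σ : WG Γ) * w = w * permW σ := by
  apply Subtype.ext
  show SemidirectProduct.inr σ.1 * (w : W Γ) = (w : W Γ) * SemidirectProduct.inr σ.1
  set s := (w : W Γ).right with hs
  have hfix' : ∀ n, s n ≠ n → σ.1 n = n := by
    intro n hn
    by_contra h
    exact hn (hfix n h).1
  ext1
  · -- left components
    show (1 : ℕ → Γ) * (permAction Γ σ.1) (w : W Γ).left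
        = (w : W Γ).left * (permAction Γ s) 1
    have h1 : (permAction Γ s) (1 : ℕ → Γ) = 1 := map_one _
    rw [one_mul, h1, mul_one]
    funext n
    show (w : W Γ).left (σ.1.symm n) = (w : W Γ).left n
    by_cases h : σ.1.symm n = n
    · rw [h]
    · have h1 : σ.1 (σ.1.symm n) ≠ σ.1.symm n := by
        rw [Equiv.apply_symm_apply]; exact fun hh => h hh.symm
      have h2 : σ.1 n ≠ n := by
        intro hh
        apply h
        have := congrArg σ.1.symm hh
        rw [Equiv.symm_apply_apply] at this
        exact this.symm
      rw [(hfix _ h1).2, (hfix _ h2).2]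
  · -- right components
    show σ.1 * s = s * σ.1
    ext n
    show σ.1 (s n) = s (σ.1 n)
    by_cases h : σ.1 n = n
    · rw [h]
      by_contra hc
      have h2 : s (s n) = s n := (hfix _ hc).1
      have h3 : s n = n := s.injective h2
      rw [h3, h] at hc
      exact hc rfl
    · have h1 : s n = n := (hfix n h).1
      have h2 : σ.1 (σ.1 n) ≠ σ.1 n := fun hh => h (σ.1.injective hh)
      rw [h1, (hfix _ h2).1]
theorem permW_comm_of_ge {Γ : Type*} [Group Γ] {j k N : ℕ} (hj : N ≤ j) (hk : N ≤ k)
    (w : WG Γ)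
    (hw : ∀ n, N ≤ n → (w : W Γ).right n = n ∧ (w : W Γ).left n = 1) :
    (permW ⟨Equiv.swap j k, swap_mem_SInf j k⟩ : WG Γ) * w = w * permW ⟨Equiv.swap j k, swap_mem_SInf j k⟩ := by
  apply permW_comm
  intro n hn
  have : n = j ∨ n = k := by
    by_contra hc
    push_neg at hc
    exact hn (Equiv.swap_apply_of_ne_of_ne hc.1 hc.2)
  rcases this with rfl | rfl
  · exact hw n hj
  · exact hw n hk

theorem eventually_const {Γ : Type*} [Group Γ] (φ : WG Γ → ℂ) (hcentral : IsSCentral φ)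
    (i : ℕ) (g h : WG Γ) :
    ∃ N : ℕ, ∀ j k : ℕ, N ≤ j → N ≤ k →
      φ (h⁻¹ * swapW i j * g) = φ (h⁻¹ * swapW i k * g) := by
  obtain ⟨b, hb⟩ := (g.2.1.union (g.2.2.union (h.2.1.union h.2.2))).bddAbove
  refine ⟨max b i + 1, fun j k hj hk => ?_⟩
  have hout : ∀ n, max b i + 1 ≤ n →
      ((g : W Γ).right n = n ∧ (g : W Γ).left n = 1) ∧
      ((h : W Γ).right n = n ∧ (h : W Γ).left n = 1) ∧ n ≠ i := by
    intro n hn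
    have hnb : ¬ n ≤ b := by omega
    have hns : n ∉ ({n | (g : W Γ).right n ≠ n} ∪ ({n | (g : W Γ).left n ≠ 1} ∪
        ({n | (h : W Γ).right n ≠ n} ∪ {n | (h : W Γ).left n ≠ 1}))) := fun hmem => hnb (hb hmem)
    simp only [Set.mem_union, Set.mem_setOf_eq, not_or, not_not] at hns
    refine ⟨⟨hns.1, hns.2.1⟩, ⟨hns.2.2.1, hns.2.2.2⟩, by omega⟩
  by_cases hjk : j = k
  · rw [hjk]
  have hij : i ≠ j := fun hh => (hout j hj).2.2 hh.symm
  have hik : i ≠ k := fun hh => (hout k hk).2.2 hh.symm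
  set σ : SInf := ⟨Equiv.swap j k, swap_mem_SInf j k⟩ with hσ
  set P : WG Γ := permW σ with hP
  have hcg : P * g = g * P := permW_comm_of_ge hj hk g (fun n hn => (hout n hn).1)
  have hch : P * h = h * P := permW_comm_of_ge hj hk h (fun n hn => (hout n hn).2.1)
  have hchinv : P * h⁻¹ = h⁻¹ * P := (Commute.inv_right hch : _)
  have hgP : g * P⁻¹ = P⁻¹ * g := ((Commute.inv_right (hcg.symm : Commute g P) : Commute g P⁻¹) : _).symm ▸ rfl
  have hconj : P * swapW i j * P⁻¹ = swapW i k := by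
    rw [hP, swapW, swapW, permW_mul, permW_inv, permW_mul]
    refine congrArg permW (Subtype.ext ?_)
    show Equiv.swap j k * Equiv.swap i j * (Equiv.swap j k)⁻¹ = Equiv.swap i k
    have := (Equiv.swap_apply_apply (Equiv.swap j k) i j).symm
    rw [Equiv.swap_apply_of_ne_of_ne hij hik, Equiv.swap_apply_left] at this
    exact this
  have key : P * (h⁻¹ * swapW i j * g) * P⁻¹ = h⁻¹ * swapW i k * g := by
    calc P * (h⁻¹ * swapW i j * g) * P⁻¹
        = (P * h⁻¹) * (swapW i j * (g * P⁻¹)) := by simp only [mul_assoc]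
      _ = (h⁻¹ * P) * (swapW i j * (P⁻¹ * g)) := by rw [hchinv, hgP]
      _ = h⁻¹ * (P * swapW i j * P⁻¹) * g := by simp only [mul_assoc]
      _ = h⁻¹ * swapW i k * g := by rw [hconj]
  have hc := hcentral σ (h⁻¹ * swapW i j * g)
  rw [show permW σ = P from rfl, key] at hc
  exact hc.symm
theorem statement_9 {Γ : Type*} [Group Γ] {H : Type*} [NormedAddCommGroup H]
    [InnerProductSpace ℂ H] [CompleteSpace H]
    (φ : WG Γ → ℂ) (hstate : IsState φ) (hcentral : IsSCentral φ)
    (π : WG Γ →* (H →L[ℂ] H)) (ξ : H) (hGNS : IsGNS φ π ξ)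
    (i : ℕ) :
    ∃ O : H →L[ℂ] H, IsSelfAdjoint O ∧ ‖O‖ ≤ 1 ∧
      ∀ x y : H, Tendsto (fun j => ⟪y, π (swapW i j) x⟫) atTop (𝓝 ⟪y, O x⟫) := by
  set T : ℕ → (H →L[ℂ] H) := fun j => π (swapW i j) with hT
  have hTT : ∀ j, T j * T j = 1 := fun j => by
    rw [hT, ← map_mul, swapW_mul_self, map_one]
  have hTstar : ∀ j, star (T j) = T j := fun j => by
    have h1 : star (T j) * T j = 1 := Unitary.star_mul_self_of_mem (hGNS.unitary _)
    calc star (T j) = star (T j) * (T j * T j) := by rw [hTT, mul_one]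
      _ = (star (T j) * T j) * T j := by rw [mul_assoc]
      _ = T j := by rw [h1, one_mul]
  have hsym : ∀ j (x y : H), ⟪T j x, y⟫ = ⟪x, T j y⟫ := fun j x y => by
    conv_rhs => rw [← hTstar j]
    rw [ContinuousLinearMap.star_eq_adjoint]
    exact (ContinuousLinearMap.adjoint_inner_right (T j) x y).symm
  have hTnorm : ∀ j (x : H), ‖T j x‖ = ‖x‖ := fun j x =>
    ContinuousLinearMap.norm_map_of_mem_unitary (hGNS.unitary _) x
  have hadjh : ∀ (h : WG Γ) (z : H), ⟪π h ξ, z⟫ = ⟪ξ, π h⁻¹ z⟫ := fun h z => by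
    have hsh : star (π h) = π h⁻¹ := by
      have h1 : star (π h) * π h = 1 := Unitary.star_mul_self_of_mem (hGNS.unitary _)
      calc star (π h) = star (π h) * (π h * π h⁻¹) := by
            rw [← map_mul, mul_inv_cancel, map_one, mul_one]
        _ = π h⁻¹ := by rw [← mul_assoc, h1, one_mul]
    rw [← hsh, ContinuousLinearMap.star_eq_adjoint]
    exact (ContinuousLinearMap.adjoint_inner_right (π h) ξ z).symm
  have hgen : ∀ g h : WG Γ, ∃ c, Tendsto (fun j => ⟪π h ξ, T j (π g ξ)⟫) atTop (𝓝 c) := by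
    intro g h
    obtain ⟨N, hN⟩ := eventually_const φ hcentral i g h
    refine ⟨φ (h⁻¹ * swapW i N * g), ?_⟩
    have heq : ∀ j, ⟪π h ξ, T j (π g ξ)⟫ = φ (h⁻¹ * swapW i j * g) := fun j => by
      rw [hadjh]
      have e : π h⁻¹ (π (swapW i j) (π g ξ)) = π (h⁻¹ * swapW i j * g) ξ := by
        rw [mul_assoc, map_mul, map_mul]; rfl
      rw [hT]
      simp only []
      rw [e]
      exact (hGNS.inner_eq _).symm
    apply tendsto_atTop_of_eventually_const (i₀ := N)
    intro j hj
    rw [heq j, hN j N hj le_rfl]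
  set D := Submodule.span ℂ (Set.range fun g : WG Γ => π g ξ) with hD
  have hspan : ∀ x ∈ D, ∀ y ∈ D, ∃ c, Tendsto (fun j => ⟪y, T j x⟫) atTop (𝓝 c) := by
    intro x hx y hy
    refine Submodule.span_induction₂
      (p := fun x y _ _ => ∃ c, Tendsto (fun j => ⟪y, T j x⟫) atTop (𝓝 c))
      ?_ ?_ ?_ ?_ ?_ ?_ ?_ hx hy
    · rintro x y ⟨g, rfl⟩ ⟨h, rfl⟩
      exact hgen g h
    · intro y _
      exact ⟨0, by simp only [map_zero, inner_zero_right]; exact tendsto_const_nhds⟩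
    · intro x _
      exact ⟨0, by simp only [inner_zero_left]; exact tendsto_const_nhds⟩
    · rintro x y z _ _ _ ⟨c1, h1⟩ ⟨c2, h2⟩
      exact ⟨c1 + c2, by
        simpa only [map_add, inner_add_right] using h1.add h2⟩
    · rintro x y z _ _ _ ⟨c1, h1⟩ ⟨c2, h2⟩
      exact ⟨c1 + c2, by
        simpa only [inner_add_left] using h1.add h2⟩
    · rintro r x y _ _ ⟨c, hc⟩
      exact ⟨r * c, by
        simpa only [map_smul, inner_smul_right] using hc.const_mul r⟩
    · rintro r x y _ _ ⟨c, hc⟩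
      exact ⟨(starRingEnd ℂ) r * c, by
        simpa only [inner_smul_left] using hc.const_mul ((starRingEnd ℂ) r)⟩
  have hcauchy : ∀ x y : H, ∃ c, Tendsto (fun j => ⟪y, T j x⟫) atTop (𝓝 c) := by
    intro x y
    apply cauchySeq_tendsto_of_complete
    rw [Metric.cauchySeq_iff]
    intro ε hε
    obtain ⟨x', hx'D, hx'⟩ := Metric.mem_closure_iff.mp (hGNS.cyclic x) (ε/8/(‖y‖+1))
      (by positivity)
    obtain ⟨y', hy'D, hy'⟩ := Metric.mem_closure_iff.mp (hGNS.cyclic y) (ε/8/(‖x'‖+1))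
      (by positivity)
    have hx'n : ‖x - x'‖ < ε/8/(‖y‖+1) := by rw [← dist_eq_norm]; exact hx'
    have hy'n : ‖y - y'‖ < ε/8/(‖x'‖+1) := by rw [← dist_eq_norm]; exact hy'
    have hbound : ∀ j, ‖⟪y, T j x⟫ - ⟪y', T j x'⟫‖ ≤ ε/4 := by
      intro j
      have e : ⟪y, T j x⟫ - ⟪y', T j x'⟫ = ⟪y, T j (x - x')⟫ + ⟪y - y', T j x'⟫ := by
        rw [map_sub, inner_sub_right, inner_sub_left]
        ring
      rw [e]
      have b1 : ‖⟪y, T j (x - x')⟫‖ ≤ ‖y‖ * ‖x - x'‖ := by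
        calc ‖⟪y, T j (x - x')⟫‖ ≤ ‖y‖ * ‖T j (x - x')‖ := norm_inner_le_norm _ _
          _ = ‖y‖ * ‖x - x'‖ := by rw [hTnorm]
      have b2 : ‖⟪y - y', T j x'⟫‖ ≤ ‖y - y'‖ * ‖x'‖ := by
        calc ‖⟪y - y', T j x'⟫‖ ≤ ‖y - y'‖ * ‖T j x'‖ := norm_inner_le_norm _ _
          _ = ‖y - y'‖ * ‖x'‖ := by rw [hTnorm]
      have c1 : ‖y‖ * ‖x - x'‖ ≤ ε/8 := by
        have h1 : ‖y‖ * ‖x - x'‖ ≤ ‖y‖ * (ε/8/(‖y‖+1)) :=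
          mul_le_mul_of_nonneg_left hx'n.le (norm_nonneg y)
        have h2 : ‖y‖ * (ε/8/(‖y‖+1)) ≤ ε/8 := by
          rw [div_div, mul_div_assoc']
          apply div_le_of_le_mul₀ (by positivity) (by positivity)
          nlinarith [norm_nonneg y, hε.le]
        linarith
      have c2 : ‖y - y'‖ * ‖x'‖ ≤ ε/8 := by
        have h1 : ‖y - y'‖ * ‖x'‖ ≤ (ε/8/(‖x'‖+1)) * ‖x'‖ :=
          mul_le_mul_of_nonneg_right hy'n.le (norm_nonneg x')
        have h2 : (ε/8/(‖x'‖+1)) * ‖x'‖ ≤ ε/8 := by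
          rw [div_div, div_mul_eq_mul_div]
          apply div_le_of_le_mul₀ (by positivity) (by positivity)
          nlinarith [norm_nonneg x', hε.le]
        linarith
      calc ‖⟪y, T j (x - x')⟫ + ⟪y - y', T j x'⟫‖
          ≤ ‖⟪y, T j (x - x')⟫‖ + ‖⟪y - y', T j x'⟫‖ := norm_add_le _ _
        _ ≤ ε/8 + ε/8 := add_le_add (le_trans b1 c1) (le_trans b2 c2)
        _ = ε/4 := by ring
    obtain ⟨c', hc'⟩ := hspan x' hx'D y' hy'D
    obtain ⟨N, hN⟩ := Metric.cauchySeq_iff.mp hc'.cauchySeq (ε/2) (by positivity)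
    refine ⟨N, fun m hm n hn => ?_⟩
    have hNmn := hN m hm n hn
    rw [dist_eq_norm] at hNmn ⊢
    have e : ⟪y, T m x⟫ - ⟪y, T n x⟫ =
        (⟪y, T m x⟫ - ⟪y', T m x'⟫) + (⟪y', T m x'⟫ - ⟪y', T n x'⟫)
        + -(⟪y, T n x⟫ - ⟪y', T n x'⟫) := by ring
    rw [e]
    have tri : ‖(⟪y, T m x⟫ - ⟪y', T m x'⟫) + (⟪y', T m x'⟫ - ⟪y', T n x'⟫)
        + -(⟪y, T n x⟫ - ⟪y', T n x'⟫)‖ ≤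
        ‖⟪y, T m x⟫ - ⟪y', T m x'⟫‖ + ‖⟪y', T m x'⟫ - ⟪y', T n x'⟫‖
        + ‖⟪y, T n x⟫ - ⟪y', T n x'⟫‖ := by
      calc ‖_ + _‖ ≤ ‖(⟪y, T m x⟫ - ⟪y', T m x'⟫) + (⟪y', T m x'⟫ - ⟪y', T n x'⟫)‖
            + ‖-(⟪y, T n x⟫ - ⟪y', T n x'⟫)‖ := norm_add_le _ _
        _ ≤ _ := by rw [norm_neg]; gcongr; exact norm_add_le _ _
    have h1 := hbound m
    have h2 := hbound n
    linarith
  choose B hB using hcauchy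
  have hBbound : ∀ x y, ‖B x y‖ ≤ ‖x‖ * ‖y‖ := by
    intro x y
    refine le_of_tendsto' (hB x y).norm (fun j => ?_)
    calc ‖⟪y, T j x⟫‖ ≤ ‖y‖ * ‖T j x‖ := norm_inner_le_norm _ _
      _ = ‖x‖ * ‖y‖ := by rw [hTnorm]; ring
  have hBaddL : ∀ x x' y, B (x + x') y = B x y + B x' y := fun x x' y =>
    tendsto_nhds_unique (hB (x + x') y)
      (((hB x y).add (hB x' y)).congr (fun j => by rw [map_add, inner_add_right]))
  have hBsmulL : ∀ (c : ℂ) x y, B (c • x) y = c * B x y := fun c x y =>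
    tendsto_nhds_unique (hB (c • x) y)
      (((hB x y).const_mul c).congr (fun j => by rw [map_smul, inner_smul_right]))
  have hBaddR : ∀ x y y', B x (y + y') = B x y + B x y' := fun x y y' =>
    tendsto_nhds_unique (hB x (y + y'))
      (((hB x y).add (hB x y')).congr (fun j => by rw [inner_add_left]))
  have hBsmulR : ∀ (c : ℂ) x y, B x (c • y) = (starRingEnd ℂ) c * B x y := fun c x y =>
    tendsto_nhds_unique (hB x (c • y))
      (((hB x y).const_mul _).congr (fun j => by rw [inner_smul_left]))
  have hRiesz : ∀ x : H, ∃ z : H, ‖z‖ ≤ ‖x‖ ∧ ∀ y, ⟪y, z⟫ = B x y := by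
    intro x
    let f : H →ₗ[ℂ] ℂ :=
      { toFun := fun y => (starRingEnd ℂ) (B x y)
        map_add' := fun y y' => by
          show (starRingEnd ℂ) (B x (y + y')) = _
          rw [hBaddR, map_add]
        map_smul' := fun c y => by
          show (starRingEnd ℂ) (B x (c • y)) = (RingHom.id ℂ) c • (starRingEnd ℂ) (B x y)
          rw [hBsmulR, map_mul, RingHom.id_apply, Complex.conj_conj, smul_eq_mul] }
    have hfb : ∀ y, ‖f y‖ ≤ ‖x‖ * ‖y‖ := fun y => by
      show ‖(starRingEnd ℂ) (B x y)‖ ≤ ‖x‖ * ‖y‖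
      rw [RCLike.norm_conj]
      exact hBbound x y
    refine ⟨(InnerProductSpace.toDual ℂ H).symm (f.mkContinuous ‖x‖ hfb), ?_, fun y => ?_⟩
    · rw [LinearIsometryEquiv.norm_map]
      exact f.mkContinuous_norm_le (norm_nonneg x) hfb
    · rw [← inner_conj_symm]
      rw [InnerProductSpace.toDual_symm_apply]
      show (starRingEnd ℂ) ((starRingEnd ℂ) (B x y)) = B x y
      exact Complex.conj_conj _
  choose Z hZnorm hZ using hRiesz
  have hZadd : ∀ x x', Z (x + x') = Z x + Z x' := fun x x' =>
    ext_inner_left ℂ (fun v => by rw [hZ, hBaddL, inner_add_right, hZ, hZ])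
  have hZsmul : ∀ (c : ℂ) (x : H), Z (c • x) = c • Z x := fun c x =>
    ext_inner_left ℂ (fun v => by rw [hZ, hBsmulL, inner_smul_right, hZ])
  let Olin : H →ₗ[ℂ] H := { toFun := Z, map_add' := hZadd, map_smul' := hZsmul }
  have hOb : ∀ x, ‖Olin x‖ ≤ 1 * ‖x‖ := fun x => by rw [one_mul]; exact hZnorm x
  refine ⟨Olin.mkContinuous 1 hOb, ?_, Olin.mkContinuous_norm_le zero_le_one hOb, ?_⟩
  · rw [ContinuousLinearMap.isSelfAdjoint_iff_isSymmetric]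
    intro x y
    have h1 : ⟪(Olin.mkContinuous 1 hOb) x, y⟫ = (starRingEnd ℂ) (B x y) := by
      rw [← inner_conj_symm]
      congr 1
      exact hZ x y
    have h2 : ⟪x, (Olin.mkContinuous 1 hOb) y⟫ = B y x := hZ y x
    simp only [ContinuousLinearMap.coe_coe]
    rw [h1, h2]
    have hconj : Tendsto (fun j => (starRingEnd ℂ) ⟪y, T j x⟫) atTop
        (𝓝 ((starRingEnd ℂ) (B x y))) := (RCLike.continuous_conj.tendsto _).comp (hB x y)
    refine tendsto_nhds_unique (hconj.congr (fun j => ?_)) (hB y x)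
    rw [inner_conj_symm, hsym]
  · intro x y
    have : ⟪y, (Olin.mkContinuous 1 hOb) x⟫ = B x y := hZ x y
    rw [this]
    exact hB x y
end DN
end
end

section
/- Let φ be an 𝔖∞-central state on G = Γ≀𝔖∞ with GNS triple (π, H, ξ), and let O_k be the asymptotic transpositions. Fix n ∈ ℕ and let g, h ∈ G^{(n)}, i.e. writing g = sγ one has s(n) = n and γ_n = e, and similarly for h. Then for every k ∈ ℕ with k ≠ n: ⟨π(g·(n k)·h)ξ, ξ⟩ = ⟨π(g)·O_k·π(h)ξ, ξ⟩, where (n k) ∈ 𝔖∞ is the transposition of n and k. -/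
open scoped Classical ComplexOrder
open Filter Topology

noncomputable section

namespace DN

local notation "⟪" x ", " y "⟫" => @inner ℂ _ _ x y

variable {Γ : Type*} [Group Γ]
variable {H : Type*} [NormedAddCommGroup H] [InnerProductSpace ℂ H] [CompleteSpace H]

section Aux

variable {Γ' : Type*} [Group Γ']

theorem coe_mul_WG (a b : WG Γ') : ((a * b : WG Γ') : W Γ') = (a : W Γ') * (b : W Γ') := rfl

theorem coe_inv_WG (a : WG Γ') : ((a⁻¹ : WG Γ') : W Γ') = (a : W Γ')⁻¹ := rfl

theorem coe_permW (s : SInf) : ((permW s : WG Γ') : W Γ') = SemidirectProduct.inr s.1 := rfl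

/-- Conjugation by a permutation that "commutes" with `a`. -/
theorem permW_conj_eq {s : Equiv.Perm ℕ} (hs : s ∈ SInf) (a : WG Γ')
    (h1 : ∀ i, s ((a : W Γ').right (s⁻¹ i)) = (a : W Γ').right i)
    (h2 : ∀ i, (a : W Γ').left (s⁻¹ i) = (a : W Γ').left i) :
    permW ⟨s, hs⟩ * a * (permW ⟨s, hs⟩)⁻¹ = a := by
  apply Subtype.ext
  rw [coe_mul_WG, coe_mul_WG, coe_inv_WG, coe_permW, ← map_inv]
  ext i
  · show ((1 : ℕ → Γ') * permAction Γ' s (a : W Γ').left *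
      permAction Γ' (s * (a : W Γ').right) ((1 : ℕ → Γ') : ℕ → Γ')) i = (a : W Γ').left i
    simp only [Pi.mul_apply, map_one, Pi.one_apply, one_mul, mul_one]
    exact h2 i
  · show (s * (a : W Γ').right * s⁻¹) i = (a : W Γ').right i
    simp only [Equiv.Perm.mul_apply]
    exact h1 i

theorem swapW_conj_swapW {n j kk : ℕ} (hjn : j ≠ n) (hjk : j ≠ kk) (hkn : kk ≠ n) :
    swapW n j * swapW kk j * (swapW n j)⁻¹ = (swapW n kk : WG Γ') := by
  apply Subtype.ext
  rw [coe_mul_WG, coe_mul_WG, coe_inv_WG]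
  show SemidirectProduct.inr _ * SemidirectProduct.inr _ * (SemidirectProduct.inr _)⁻¹ =
    SemidirectProduct.inr _
  rw [← map_inv, ← map_mul, ← map_mul]
  congr 1
  ext i
  simp only [Equiv.Perm.mul_apply, Equiv.swap_inv, Equiv.swap_apply_def]
  split_ifs <;> omega

end Aux

theorem statement_10 {Γ : Type*} [Group Γ] {H : Type*} [NormedAddCommGroup H]
    [InnerProductSpace ℂ H] [CompleteSpace H]
    (φ : WG Γ → ℂ) (hstate : IsState φ) (hcentral : IsSCentral φ)
    (π : WG Γ →* (H →L[ℂ] H)) (ξ : H) (hGNS : IsGNS φ π ξ)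
    (O : ℕ → (H →L[ℂ] H)) (hOsa : ∀ i, IsSelfAdjoint (O i))
    (hO : ∀ (i : ℕ) (x y : H),
      Tendsto (fun j => ⟪y, π (swapW i j) x⟫) atTop (𝓝 ⟪y, O i x⟫))
    (n : ℕ) (g h : WG Γ)
    (hg : (g : W Γ).right n = n ∧ (g : W Γ).left n = 1)
    (hh : (h : W Γ).right n = n ∧ (h : W Γ).left n = 1)
    (k : ℕ) (hk : k ≠ n) :
    ⟪ξ, π (g * swapW n k * h) ξ⟫ = ⟪ξ, π g (O k (π h ξ))⟫ := by
  -- star (π g) = π g⁻¹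
  have hstar : ∀ a : WG Γ, star (π a) = π a⁻¹ := by
    intro a
    have h1 : star (π a) * π a = 1 := ((Unitary.mem_iff).mp (hGNS.unitary a)).1
    calc star (π a) = star (π a) * (π a * π a⁻¹) := by
          rw [← map_mul, mul_inv_cancel, map_one, mul_one]
      _ = (star (π a) * π a) * π a⁻¹ := by rw [mul_assoc]
      _ = π a⁻¹ := by rw [h1, one_mul]
  have hadj : ∀ (a : WG Γ) (y : H), ⟪ξ, π a y⟫ = ⟪π a⁻¹ ξ, y⟫ := by
    intro a y
    rw [← ContinuousLinearMap.adjoint_inner_left, ← ContinuousLinearMap.star_eq_adjoint, hstar]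
  -- the inner products as values of φ
  have hfun : ∀ t : WG Γ, ⟪π g⁻¹ ξ, π t (π h ξ)⟫ = φ (g * t * h) := by
    intro t
    rw [hGNS.inner_eq, map_mul, map_mul, ContinuousLinearMap.mul_apply,
      ContinuousLinearMap.mul_apply, hadj]
  -- eventual constancy
  obtain ⟨N, hN⟩ := (((g.2.1.union g.2.2).union (h.2.1.union h.2.2)).union
    (Set.finite_singleton n |>.union (Set.finite_singleton k))).bddAbove
  have hev : ∀ᶠ j in atTop, φ (g * swapW k j * h) = φ (g * swapW n k * h) := by
    filter_upwards [eventually_gt_atTop N] with j hj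
    have hjmem : ∀ x ∈ ((({i | (g : W Γ).right i ≠ i} ∪ {i | (g : W Γ).left i ≠ 1}) ∪
        ({i | (h : W Γ).right i ≠ i} ∪ {i | (h : W Γ).left i ≠ 1})) ∪
        (({n} : Set ℕ) ∪ {k})), x ≤ N := hN
    have hj' : j ∉ (({i | (g : W Γ).right i ≠ i} ∪ {i | (g : W Γ).left i ≠ 1}) ∪
        ({i | (h : W Γ).right i ≠ i} ∪ {i | (h : W Γ).left i ≠ 1})) ∪
        (({n} : Set ℕ) ∪ {k}) := fun hmem => absurd (hjmem j hmem) (not_le.mpr hj)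
    simp only [Set.mem_union, Set.mem_singleton_iff, Set.mem_setOf_eq, not_or, not_not] at hj'
    obtain ⟨⟨⟨hgr, hgl⟩, ⟨hhr, hhl⟩⟩, hjn, hjk⟩ := hj'
    set s : Equiv.Perm ℕ := Equiv.swap n j with hs
    have hsinv : s⁻¹ = s := Equiv.swap_inv n j
    -- conjugation fixes g
    have conj_fix : ∀ a : WG Γ, (a : W Γ).right n = n → (a : W Γ).left n = 1 →
        (a : W Γ).right j = j → (a : W Γ).left j = 1 →
        permW ⟨s, swap_mem_SInf n j⟩ * a * (permW ⟨s, swap_mem_SInf n j⟩)⁻¹ = a := by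
      intro a h1 h2 h3 h4
      apply permW_conj_eq
      · intro i
        rw [hsinv]
        rcases eq_or_ne i n with rfl | hin
        · rw [hs, Equiv.swap_apply_left, h3, Equiv.swap_apply_right, h1]
        rcases eq_or_ne i j with rfl | hij
        · rw [hs, Equiv.swap_apply_right, h1, Equiv.swap_apply_left, h3]
        rw [hs, Equiv.swap_apply_of_ne_of_ne hin hij]
        apply Equiv.swap_apply_of_ne_of_ne
        · intro hc
          exact hin ((a : W Γ).right.injective (hc.trans h1.symm))
        · intro hc
          exact hij ((a : W Γ).right.injective (hc.trans h3.symm))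
      · intro i
        rw [hsinv]
        rcases eq_or_ne i n with rfl | hin
        · rw [hs, Equiv.swap_apply_left, h4, h2]
        rcases eq_or_ne i j with rfl | hij
        · rw [hs, Equiv.swap_apply_right, h2, h4]
        rw [hs, Equiv.swap_apply_of_ne_of_ne hin hij]
    have conj_g := conj_fix g hg.1 hg.2 hgr hgl
    have conj_h := conj_fix h hh.1 hh.2 hhr hhl
    have conj_swap : permW ⟨s, swap_mem_SInf n j⟩ * swapW k j *
        (permW ⟨s, swap_mem_SInf n j⟩)⁻¹ = (swapW n k : WG Γ) := by
      have : (permW ⟨s, swap_mem_SInf n j⟩ : WG Γ) = swapW n j := rfl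
      rw [this]
      exact swapW_conj_swapW hjn hjk hk
    have key : permW ⟨s, swap_mem_SInf n j⟩ * (g * swapW k j * h) *
        (permW ⟨s, swap_mem_SInf n j⟩)⁻¹ = g * swapW n k * h := by
      calc permW ⟨s, swap_mem_SInf n j⟩ * (g * swapW k j * h) *
            (permW ⟨s, swap_mem_SInf n j⟩)⁻¹
          = (permW ⟨s, swap_mem_SInf n j⟩ * g * (permW ⟨s, swap_mem_SInf n j⟩)⁻¹) *
            (permW ⟨s, swap_mem_SInf n j⟩ * swapW k j * (permW ⟨s, swap_mem_SInf n j⟩)⁻¹) *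
            (permW ⟨s, swap_mem_SInf n j⟩ * h * (permW ⟨s, swap_mem_SInf n j⟩)⁻¹) := by
            group
        _ = g * swapW n k * h := by rw [conj_g, conj_h, conj_swap]
    rw [← hcentral ⟨s, swap_mem_SInf n j⟩ (g * swapW k j * h), key]
  -- conclude via uniqueness of limits
  have hlim1 : Tendsto (fun j => φ (g * swapW k j * h)) atTop
      (𝓝 ⟪π g⁻¹ ξ, O k (π h ξ)⟫) := by
    refine (hO k (π h ξ) (π g⁻¹ ξ)).congr fun j => hfun (swapW k j)
  have hlim2 : Tendsto (fun j => φ (g * swapW k j * h)) atTop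
      (𝓝 (φ (g * swapW n k * h))) := by
    refine Tendsto.congr' (hev.mono fun j hj => hj.symm)
      (tendsto_const_nhds : Tendsto (fun _ : ℕ => φ (g * swapW n k * h)) atTop (𝓝 _))
  have heq := tendsto_nhds_unique hlim2 hlim1
  rw [← hGNS.inner_eq, heq, hadj]

end DN
end
end

section
/- Let φ be an 𝔖∞-central state on G = Γ≀𝔖∞ with GNS triple (π, H, ξ), and let O_k (k ∈ ℕ) be the asymptotic transpositions. Then: (1) O_k·O_n = O_n·O_k for all k, n ∈ ℕ; (2) O_k·π(γ) = π(γ)·O_k for every γ = (γ₁,γ₂,...) ∈ Γ^∞_e with γ_k = e; (3) π(s)·O_k = O_{s(k)}·π(s) for every s ∈ 𝔖∞ and every k ∈ ℕ. -/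
open scoped Classical ComplexOrder
open Filter Topology

noncomputable section

namespace DN

local notation "⟪" x ", " y "⟫" => @inner ℂ _ _ x y

variable {Γ : Type*} [Group Γ]
variable {H : Type*} [NormedAddCommGroup H] [InnerProductSpace ℂ H] [CompleteSpace H]

section AuxDN

variable {Γ : Type*} [Group Γ] {H : Type*} [NormedAddCommGroup H]
  [InnerProductSpace ℂ H] [CompleteSpace H]

theorem eventually_not_mem_aux {A : Set ℕ} (hA : A.Finite) : ∀ᶠ j in atTop, j ∉ A := by
  obtain ⟨N, hN⟩ := hA.bddAbove
  filter_upwards [eventually_gt_atTop N] with j hj hmem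
  exact absurd (hN hmem) (not_le.mpr hj)

theorem pi_inner_aux (π : WG Γ →* (H →L[ℂ] H)) (hu : ∀ g, π g ∈ unitary (H →L[ℂ] H))
    (g : WG Γ) (x y : H) : ⟪y, π g x⟫ = ⟪π g⁻¹ y, x⟫ := by
  have hstar : star (π g) = π g⁻¹ := by
    have h1 : star (π g) * π g = 1 := (Unitary.mem_iff.mp (hu g)).1
    calc star (π g) = star (π g) * (π g * π g⁻¹) := by
          rw [← map_mul, mul_inv_cancel, map_one, mul_one]
      _ = π g⁻¹ := by rw [← mul_assoc, h1, one_mul]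
  rw [← hstar, ContinuousLinearMap.star_eq_adjoint, ContinuousLinearMap.adjoint_inner_left]

theorem permW_swapW_aux (s : SInf) (a b : ℕ) :
    (permW s : WG Γ) * swapW a b = swapW (s.1 a) (s.1 b) * permW s := by
  apply Subtype.ext
  show (SemidirectProduct.inr s.1 : W Γ) * SemidirectProduct.inr (Equiv.swap a b) =
    SemidirectProduct.inr (Equiv.swap (s.1 a) (s.1 b)) * SemidirectProduct.inr s.1
  rw [← map_mul, ← map_mul, Equiv.swap_apply_apply]
  congr 1
  group

theorem swapW_seqW_comm_aux (γ : GammaE Γ) (k j : ℕ) (hk : (γ : ℕ → Γ) k = 1)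
    (hj : (γ : ℕ → Γ) j = 1) :
    (swapW k j : WG Γ) * seqW γ = seqW γ * swapW k j := by
  have hact : permAction Γ (Equiv.swap k j) γ.1 = γ.1 := by
    funext i
    show γ.1 ((Equiv.swap k j).symm i) = γ.1 i
    rw [Equiv.symm_swap]
    rcases eq_or_ne i k with rfl | hik
    · rw [Equiv.swap_apply_left, hj, hk]
    · rcases eq_or_ne i j with rfl | hij
      · rw [Equiv.swap_apply_right, hk, hj]
      · rw [Equiv.swap_apply_of_ne_of_ne hik hij]
  apply Subtype.ext
  show (SemidirectProduct.inr (Equiv.swap k j) : W Γ) * SemidirectProduct.inl γ.1 =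
    SemidirectProduct.inl γ.1 * SemidirectProduct.inr (Equiv.swap k j)
  ext
  · simp [hact]
  · simp

theorem key3_aux (π : WG Γ →* (H →L[ℂ] H)) (hu : ∀ g, π g ∈ unitary (H →L[ℂ] H))
    (O : ℕ → (H →L[ℂ] H))
    (hO : ∀ (i : ℕ) (x y : H),
      Tendsto (fun j => ⟪y, π (swapW i j) x⟫) atTop (𝓝 ⟪y, O i x⟫))
    (s : SInf) (k : ℕ) :
    π (permW s) * O k = O (s.1 k) * π (permW s) := by
  ext x
  refine ext_inner_left ℂ fun y => ?_
  have heq : ∀ z : H, ⟪π (permW s : WG Γ)⁻¹ y, z⟫ = ⟪y, π (permW s) z⟫ :=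
    fun z => (pi_inner_aux π hu (permW s) z y).symm
  have h1 : Tendsto (fun j => ⟪y, π (permW s * swapW k j) x⟫) atTop
      (𝓝 ⟪y, π (permW s) (O k x)⟫) := by
    have h := hO k x (π (permW s : WG Γ)⁻¹ y)
    simp only [heq] at h
    simpa only [map_mul, ContinuousLinearMap.mul_apply] using h
  have h2 : Tendsto (fun j => ⟪y, π (swapW (s.1 k) j) (π (permW s) x)⟫) atTop
      (𝓝 ⟪y, O (s.1 k) (π (permW s) x)⟫) := hO _ _ _
  have hev : (fun j => ⟪y, π (permW s * swapW k j) x⟫) =ᶠ[atTop]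
      (fun j => ⟪y, π (swapW (s.1 k) j) (π (permW s) x)⟫) := by
    filter_upwards [eventually_not_mem_aux ((mem_SInf s.1).mp s.2)] with j hj
    have hsj : s.1 j = j := not_not.mp hj
    rw [permW_swapW_aux, hsj, map_mul, ContinuousLinearMap.mul_apply]
  have := tendsto_nhds_unique (Filter.Tendsto.congr' hev h1) h2
  simpa only [ContinuousLinearMap.mul_apply] using this

theorem key2_aux (π : WG Γ →* (H →L[ℂ] H)) (hu : ∀ g, π g ∈ unitary (H →L[ℂ] H))
    (O : ℕ → (H →L[ℂ] H))
    (hO : ∀ (i : ℕ) (x y : H),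
      Tendsto (fun j => ⟪y, π (swapW i j) x⟫) atTop (𝓝 ⟪y, O i x⟫))
    (k : ℕ) (γ : GammaE Γ) (hγk : (γ : ℕ → Γ) k = 1) :
    O k * π (seqW γ) = π (seqW γ) * O k := by
  ext x
  refine ext_inner_left ℂ fun y => ?_
  have h1 : Tendsto (fun j => ⟪y, π (swapW k j) (π (seqW γ) x)⟫) atTop
      (𝓝 ⟪y, O k (π (seqW γ) x)⟫) := hO _ _ _
  have h2 : Tendsto (fun j => ⟪π (seqW γ : WG Γ)⁻¹ y, π (swapW k j) x⟫) atTop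
      (𝓝 ⟪π (seqW γ : WG Γ)⁻¹ y, O k x⟫) := hO _ _ _
  have hev : (fun j => ⟪π (seqW γ : WG Γ)⁻¹ y, π (swapW k j) x⟫) =ᶠ[atTop]
      (fun j => ⟪y, π (swapW k j) (π (seqW γ) x)⟫) := by
    filter_upwards [eventually_not_mem_aux ((mem_GammaE γ.1).mp γ.2)] with j hj
    have hγj : (γ : ℕ → Γ) j = 1 := not_not.mp hj
    calc ⟪π (seqW γ : WG Γ)⁻¹ y, π (swapW k j) x⟫
        = ⟪y, π (seqW γ) (π (swapW k j) x)⟫ :=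
          (pi_inner_aux π hu (seqW γ) (π (swapW k j) x) y).symm
      _ = ⟪y, π (seqW γ * swapW k j) x⟫ := by
          rw [map_mul, ContinuousLinearMap.mul_apply]
      _ = ⟪y, π (swapW k j * seqW γ) x⟫ := by
          rw [swapW_seqW_comm_aux γ k j hγk hγj]
      _ = ⟪y, π (swapW k j) (π (seqW γ) x)⟫ := by
          rw [map_mul, ContinuousLinearMap.mul_apply]
  have hlim := tendsto_nhds_unique (Filter.Tendsto.congr' hev h2) h1
  have hfinal : ⟪y, π (seqW γ) (O k x)⟫ = ⟪y, O k (π (seqW γ) x)⟫ := by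
    rw [pi_inner_aux π hu (seqW γ) (O k x) y]
    exact hlim
  simpa only [ContinuousLinearMap.mul_apply] using hfinal.symm

end AuxDN

theorem statement_11 {Γ : Type*} [Group Γ] {H : Type*} [NormedAddCommGroup H]
    [InnerProductSpace ℂ H] [CompleteSpace H]
    (φ : WG Γ → ℂ) (hstate : IsState φ) (hcentral : IsSCentral φ)
    (π : WG Γ →* (H →L[ℂ] H)) (ξ : H) (hGNS : IsGNS φ π ξ)
    (O : ℕ → (H →L[ℂ] H)) (hOsa : ∀ i, IsSelfAdjoint (O i))
    (hO : ∀ (i : ℕ) (x y : H),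
      Tendsto (fun j => ⟪y, π (swapW i j) x⟫) atTop (𝓝 ⟪y, O i x⟫)) :
    (∀ k n : ℕ, O k * O n = O n * O k) ∧
    (∀ (k : ℕ) (γ : GammaE Γ), (γ : ℕ → Γ) k = 1 →
      O k * π (seqW γ) = π (seqW γ) * O k) ∧
    (∀ (s : SInf) (k : ℕ),
      π (permW s) * O k = O ((s : Equiv.Perm ℕ) k) * π (permW s)) := by
  have hu := hGNS.unitary
  refine ⟨?_, fun k γ hγk => key2_aux π hu O hO k γ hγk, fun s k => key3_aux π hu O hO s k⟩
  intro k n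
  rcases eq_or_ne k n with rfl | hkn
  · rfl
  ext x
  refine ext_inner_left ℂ fun y => ?_
  have h1 : Tendsto (fun j => ⟪y, π (swapW k j) (O n x)⟫) atTop
      (𝓝 ⟪y, O k (O n x)⟫) := hO _ _ _
  have h2 : Tendsto (fun j => ⟪O n y, π (swapW k j) x⟫) atTop
      (𝓝 ⟪O n y, O k x⟫) := hO _ _ _
  have hsa : ∀ z w : H, ⟪w, O n z⟫ = ⟪O n w, z⟫ := by
    intro z w
    conv_rhs => rw [← (hOsa n).star_eq, ContinuousLinearMap.star_eq_adjoint]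
    rw [ContinuousLinearMap.adjoint_inner_left]
  have hev : (fun j => ⟪y, π (swapW k j) (O n x)⟫) =ᶠ[atTop]
      (fun j => ⟪O n y, π (swapW k j) x⟫) := by
    filter_upwards [eventually_ne_atTop n] with j hjn
    have hswap : Equiv.swap k j n = n :=
      Equiv.swap_apply_of_ne_of_ne (Ne.symm hkn) (Ne.symm hjn)
    have hkey : π (swapW k j) * O n = O n * π (swapW k j) := by
      have h := key3_aux π hu O hO ⟨Equiv.swap k j, swap_mem_SInf k j⟩ n
      rw [show ((⟨Equiv.swap k j, swap_mem_SInf k j⟩ : SInf) : Equiv.Perm ℕ) n = n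
        from hswap] at h
      exact h
    calc ⟪y, π (swapW k j) (O n x)⟫
        = ⟪y, (π (swapW k j) * O n) x⟫ := by rw [ContinuousLinearMap.mul_apply]
      _ = ⟪y, (O n * π (swapW k j)) x⟫ := by rw [hkey]
      _ = ⟪y, O n (π (swapW k j) x)⟫ := by rw [ContinuousLinearMap.mul_apply]
      _ = ⟪O n y, π (swapW k j) x⟫ := hsa _ _
  have hlim := tendsto_nhds_unique (Filter.Tendsto.congr' hev h1) h2
  have : ⟪y, O k (O n x)⟫ = ⟪y, O n (O k x)⟫ := by rw [hlim, ← hsa]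
  simpa only [ContinuousLinearMap.mul_apply] using this

end DN
end
end
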